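/- arXiv:hep-th/9902189 — 5 statements merged into one kernel-verified Lean document; each statement's English description precedes it below -/
import Mathlib

section
/- Let m > 0 and let f : ℝ × ℝ → ℂ be twice continuously differentiable, and set g(r,t) = (1+e^r)^{1/2} f(r,t). Then f satisfies the black-hole wave equation e^{−r} ∂_r((1+e^r) ∂_r f) − (e^{−r}+1) ∂_t² f = (m² − 1/4) f on ℝ × ℝ if and only if g satisfies the Schrödinger-form equation ∂_t² g(r,t) = ∂_r² g(r,t) − V(r) g(r,t) on ℝ × ℝ. -/
open Real Complex

/-- The potential `V(r) = e^r/(4(1+e^r)^2) + m^2 e^r/(1+e^r)`. -/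
noncomputable def blackHolePotential (m : ℝ) (r : ℝ) : ℝ :=
  Real.exp r / (4 * (1 + Real.exp r) ^ 2) + m ^ 2 * Real.exp r / (1 + Real.exp r)

private lemma bh_key (M S D1 D2 D34 F A B C : ℂ) (hS : S ≠ 0) (hE : S^2 - 1 ≠ 0)
    (hD1 : D1 * (4*S^3) = 2*(S^2-1)*S^2 - (S^2-1)^2)
    (hD2 : D2 * (2*S) = S^2 - 1)
    (hD34 : D34 * (4*S^4) = (S^2-1) + 4*M^2*(S^2-1)*S^2) :
    ((S^2-1)⁻¹ * ((S^2-1) * A + (1 + (S^2-1)) * B) - ((S^2-1)⁻¹ + 1) * C = (M^2 - 1/4) * F)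
    ↔ (S * C = D1 * F + D2 * A + (D2 * A + S * B) - D34 * (S * F)) := by
  have h4 : (4*S^4 : ℂ) ≠ 0 := by simp [pow_eq_zero_iff, hS]
  constructor
  · intro h
    field_simp at h
    apply mul_left_cancel₀ h4
    linear_combination (-S^3) * h + (-S*F) * hD1 + (-4*S^3*A) * hD2 + (S*F) * hD34
  · intro h
    field_simp
    apply mul_left_cancel₀ (pow_ne_zero 3 hS)
    linear_combination (-4*S^4) * h + (-S*F) * hD1 + (-4*S^3*A) * hD2 + (S*F) * hD34

private lemma bh_hasDerivAt_fst {φ : ℝ × ℝ → ℂ} (hφ : Differentiable ℝ φ) (x t : ℝ) :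
    HasDerivAt (fun y : ℝ => φ (y, t)) (fderiv ℝ φ (x, t) (1, 0)) x := by
  have h := (hφ (x, t)).hasFDerivAt.comp_hasDerivAt x
    ((hasDerivAt_id x).prodMk (hasDerivAt_const x t))
  exact h

private lemma bh_hasDerivAt_snd {φ : ℝ × ℝ → ℂ} (hφ : Differentiable ℝ φ) (x t : ℝ) :
    HasDerivAt (fun s' : ℝ => φ (x, s')) (fderiv ℝ φ (x, t) (0, 1)) t := by
  have h := (hφ (x, t)).hasFDerivAt.comp_hasDerivAt t
    ((hasDerivAt_const t x).prodMk (hasDerivAt_id t))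
  exact h

private lemma bh_hasDerivAt_sqrt (x : ℝ) :
    HasDerivAt (fun y : ℝ => Real.sqrt (1 + Real.exp y))
      (Real.exp x / (2 * Real.sqrt (1 + Real.exp x))) x := by
  have h1 : HasDerivAt (fun y : ℝ => 1 + Real.exp y) (Real.exp x) x := by
    exact (Real.hasDerivAt_exp x).const_add 1
  exact h1.sqrt (by positivity)

private lemma bh_hasDerivAt_psi (x : ℝ) :
    HasDerivAt (fun y : ℝ => Real.exp y / (2 * Real.sqrt (1 + Real.exp y)))
      ((Real.exp x * (2 * Real.sqrt (1 + Real.exp x)) -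
          Real.exp x * (2 * (Real.exp x / (2 * Real.sqrt (1 + Real.exp x))))) /
        (2 * Real.sqrt (1 + Real.exp x)) ^ 2) x := by
  have hs : (0:ℝ) < Real.sqrt (1 + Real.exp x) := Real.sqrt_pos.2 (by positivity)
  exact (Real.hasDerivAt_exp x).div
    (HasDerivAt.const_mul 2 (bh_hasDerivAt_sqrt x)) (by positivity)

/-- `f` satisfies the black-hole wave equation
`e^{−r} ∂_r((1+e^r) ∂_r f) − (e^{−r}+1) ∂_t² f = (m² − 1/4) f`
iff `g = (1+e^r)^{1/2} f` satisfies `∂_t² g = ∂_r² g − V g`. -/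
theorem blackHole_waveEq_iff_schrodingerForm (m : ℝ) (hm : 0 < m)
    (f : ℝ × ℝ → ℂ) (hf : ContDiff ℝ 2 f)
    (g : ℝ × ℝ → ℂ)
    (hg : ∀ r t : ℝ, g (r, t) = (Real.sqrt (1 + Real.exp r) : ℂ) * f (r, t)) :
    (∀ r t : ℝ,
        (Real.exp (-r) : ℂ) *
            deriv (fun x : ℝ => ((1 + Real.exp x : ℝ) : ℂ) *
              deriv (fun y : ℝ => f (y, t)) x) r
          - ((Real.exp (-r) + 1 : ℝ) : ℂ) *
              deriv (fun s : ℝ => deriv (fun s' : ℝ => f (r, s')) s) t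
        = ((m ^ 2 - 1 / 4 : ℝ) : ℂ) * f (r, t))
    ↔ (∀ r t : ℝ,
        deriv (fun s : ℝ => deriv (fun s' : ℝ => g (r, s')) s) t
        = deriv (fun x : ℝ => deriv (fun y : ℝ => g (y, t)) x) r
          - (blackHolePotential m r : ℂ) * g (r, t)) := by
  have hfd : Differentiable ℝ f := hf.differentiable two_ne_zero
  set F1 : ℝ × ℝ → ℂ := fun p => fderiv ℝ f p (1, 0) with hF1def
  set F2 : ℝ × ℝ → ℂ := fun p => fderiv ℝ f p (0, 1) with hF2def
  have hF1c : ContDiff ℝ 1 F1 := (hf.fderiv_right (by norm_num)).clm_apply contDiff_const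
  have hF2c : ContDiff ℝ 1 F2 := (hf.fderiv_right (by norm_num)).clm_apply contDiff_const
  have hd1 : ∀ x t : ℝ, HasDerivAt (fun y : ℝ => f (y, t)) (F1 (x, t)) x :=
    fun x t => bh_hasDerivAt_fst hfd x t
  have hd2 : ∀ x s : ℝ, HasDerivAt (fun s' : ℝ => f (x, s')) (F2 (x, s)) s :=
    fun x s => bh_hasDerivAt_snd hfd x s
  have hd11 : ∀ x t : ℝ, HasDerivAt (fun y : ℝ => F1 (y, t)) (fderiv ℝ F1 (x, t) (1, 0)) x :=
    fun x t => bh_hasDerivAt_fst (hF1c.differentiable one_ne_zero) x t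
  have hd22 : ∀ x t : ℝ, HasDerivAt (fun s' : ℝ => F2 (x, s')) (fderiv ℝ F2 (x, t) (0, 1)) t :=
    fun x t => bh_hasDerivAt_snd (hF2c.differentiable one_ne_zero) x t
  have main : ∀ r t : ℝ,
      ((Real.exp (-r) : ℂ) *
            deriv (fun x : ℝ => ((1 + Real.exp x : ℝ) : ℂ) *
              deriv (fun y : ℝ => f (y, t)) x) r
          - ((Real.exp (-r) + 1 : ℝ) : ℂ) *
              deriv (fun s : ℝ => deriv (fun s' : ℝ => f (r, s')) s) t
        = ((m ^ 2 - 1 / 4 : ℝ) : ℂ) * f (r, t))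
      ↔ (deriv (fun s : ℝ => deriv (fun s' : ℝ => g (r, s')) s) t
        = deriv (fun x : ℝ => deriv (fun y : ℝ => g (y, t)) x) r
          - (blackHolePotential m r : ℂ) * g (r, t)) := by
    intro r t
    have hs0 : (0:ℝ) < Real.sqrt (1 + Real.exp r) := Real.sqrt_pos.2 (by positivity)
    have hsq : Real.sqrt (1 + Real.exp r) ^ 2 = 1 + Real.exp r :=
      Real.sq_sqrt (by positivity)
    -- complex abbreviations
    have hs2C : ((Real.exp r : ℝ) : ℂ) = ((Real.sqrt (1 + Real.exp r) : ℝ) : ℂ) ^ 2 - 1 := by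
      have := congrArg (fun x : ℝ => (x : ℂ)) hsq
      push_cast [-Complex.ofReal_exp] at this
      linear_combination -this
    have hS : ((Real.sqrt (1 + Real.exp r) : ℝ) : ℂ) ≠ 0 :=
      Complex.ofReal_ne_zero.2 (ne_of_gt hs0)
    have hE : ((Real.sqrt (1 + Real.exp r) : ℝ) : ℂ) ^ 2 - 1 ≠ 0 := by
      rw [← hs2C]
      exact Complex.ofReal_ne_zero.2 (Real.exp_ne_zero r)
    -- derivative computations
    have E1 : deriv (fun x : ℝ => ((1 + Real.exp x : ℝ) : ℂ) *
          deriv (fun y : ℝ => f (y, t)) x) r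
        = ((Real.exp r : ℝ) : ℂ) * F1 (r, t)
          + ((1 + Real.exp r : ℝ) : ℂ) * fderiv ℝ F1 (r, t) (1, 0) := by
      have h1 : (fun x : ℝ => ((1 + Real.exp x : ℝ) : ℂ) * deriv (fun y : ℝ => f (y, t)) x)
          = fun x : ℝ => ((1 + Real.exp x : ℝ) : ℂ) * F1 (x, t) := by
        funext x; rw [(hd1 x t).deriv]
      rw [h1]
      have hexp : HasDerivAt (fun x : ℝ => ((1 + Real.exp x : ℝ) : ℂ))
          ((Real.exp r : ℝ) : ℂ) r := by
        have h2 : HasDerivAt (fun x : ℝ => 1 + Real.exp x) (Real.exp r) r := by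
          exact (Real.hasDerivAt_exp r).const_add 1
        exact h2.ofReal_comp
      exact (hexp.mul (hd11 r t)).deriv
    have E2 : deriv (fun s : ℝ => deriv (fun s' : ℝ => f (r, s')) s) t
        = fderiv ℝ F2 (r, t) (0, 1) := by
      have h1 : (fun s : ℝ => deriv (fun s' : ℝ => f (r, s')) s) = fun s : ℝ => F2 (r, s) := by
        funext s; rw [(hd2 r s).deriv]
      rw [h1]
      exact (hd22 r t).deriv
    have E3 : deriv (fun s : ℝ => deriv (fun s' : ℝ => g (r, s')) s) t
        = ((Real.sqrt (1 + Real.exp r) : ℝ) : ℂ) * fderiv ℝ F2 (r, t) (0, 1) := by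
      have h1 : (fun s : ℝ => deriv (fun s' : ℝ => g (r, s')) s)
          = fun s : ℝ => ((Real.sqrt (1 + Real.exp r) : ℝ) : ℂ) * F2 (r, s) := by
        funext s
        have h2 : (fun s' : ℝ => g (r, s'))
            = fun s' : ℝ => ((Real.sqrt (1 + Real.exp r) : ℝ) : ℂ) * f (r, s') :=
          funext fun s' => hg r s'
        rw [h2]
        exact (HasDerivAt.const_mul _ (hd2 r s)).deriv
      rw [h1]
      exact (HasDerivAt.const_mul _ (hd22 r t)).deriv
    have E4 : deriv (fun x : ℝ => deriv (fun y : ℝ => g (y, t)) x) r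
        = (((Real.exp r * (2 * Real.sqrt (1 + Real.exp r)) -
              Real.exp r * (2 * (Real.exp r / (2 * Real.sqrt (1 + Real.exp r))))) /
            (2 * Real.sqrt (1 + Real.exp r)) ^ 2 : ℝ) : ℂ) * f (r, t)
          + ((Real.exp r / (2 * Real.sqrt (1 + Real.exp r)) : ℝ) : ℂ) * F1 (r, t)
          + (((Real.exp r / (2 * Real.sqrt (1 + Real.exp r)) : ℝ) : ℂ) * F1 (r, t)
            + ((Real.sqrt (1 + Real.exp r) : ℝ) : ℂ) * fderiv ℝ F1 (r, t) (1, 0)) := by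
      have h1 : (fun x : ℝ => deriv (fun y : ℝ => g (y, t)) x)
          = fun x : ℝ => ((Real.exp x / (2 * Real.sqrt (1 + Real.exp x)) : ℝ) : ℂ) * f (x, t)
            + ((Real.sqrt (1 + Real.exp x) : ℝ) : ℂ) * F1 (x, t) := by
        funext x
        have h2 : (fun y : ℝ => g (y, t))
            = fun y : ℝ => ((Real.sqrt (1 + Real.exp y) : ℝ) : ℂ) * f (y, t) :=
          funext fun y => hg y t
        rw [h2]
        exact (((bh_hasDerivAt_sqrt x).ofReal_comp).mul (hd1 x t)).deriv
      rw [h1]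
      exact ((((bh_hasDerivAt_psi r).ofReal_comp).mul (hd1 r t)).add
        ((((bh_hasDerivAt_sqrt r)).ofReal_comp).mul (hd11 r t))).deriv
    -- cast identities
    have c1 : ((Real.exp (-r) : ℝ) : ℂ)
        = (((Real.sqrt (1 + Real.exp r) : ℝ) : ℂ) ^ 2 - 1)⁻¹ := by
      rw [Real.exp_neg]; push_cast [-Complex.ofReal_exp]; rw [hs2C]
    have c2 : ((1 + Real.exp r : ℝ) : ℂ)
        = 1 + (((Real.sqrt (1 + Real.exp r) : ℝ) : ℂ) ^ 2 - 1) := by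
      push_cast [-Complex.ofReal_exp]; rw [hs2C]
    have c3 : ((Real.exp (-r) + 1 : ℝ) : ℂ)
        = (((Real.sqrt (1 + Real.exp r) : ℝ) : ℂ) ^ 2 - 1)⁻¹ + 1 := by
      rw [Real.exp_neg]; push_cast [-Complex.ofReal_exp]; rw [hs2C]
    have c4 : ((m ^ 2 - 1 / 4 : ℝ) : ℂ) = ((m : ℝ) : ℂ) ^ 2 - 1 / 4 := by
      push_cast [-Complex.ofReal_exp]; ring
    -- product relations for the messy coefficients
    have hD1R : ((Real.exp r * (2 * Real.sqrt (1 + Real.exp r)) -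
          Real.exp r * (2 * (Real.exp r / (2 * Real.sqrt (1 + Real.exp r))))) /
        (2 * Real.sqrt (1 + Real.exp r)) ^ 2) * (4 * Real.sqrt (1 + Real.exp r) ^ 3)
        = 2 * Real.exp r * Real.sqrt (1 + Real.exp r) ^ 2 - Real.exp r ^ 2 := by
      field_simp
      ring
    have hD1 : (((Real.exp r * (2 * Real.sqrt (1 + Real.exp r)) -
          Real.exp r * (2 * (Real.exp r / (2 * Real.sqrt (1 + Real.exp r))))) /
        (2 * Real.sqrt (1 + Real.exp r)) ^ 2 : ℝ) : ℂ)
          * (4 * ((Real.sqrt (1 + Real.exp r) : ℝ) : ℂ) ^ 3)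
        = 2 * ((((Real.sqrt (1 + Real.exp r) : ℝ) : ℂ)) ^ 2 - 1)
            * (((Real.sqrt (1 + Real.exp r) : ℝ) : ℂ)) ^ 2
          - ((((Real.sqrt (1 + Real.exp r) : ℝ) : ℂ)) ^ 2 - 1) ^ 2 := calc
      (((Real.exp r * (2 * Real.sqrt (1 + Real.exp r)) -
          Real.exp r * (2 * (Real.exp r / (2 * Real.sqrt (1 + Real.exp r))))) /
        (2 * Real.sqrt (1 + Real.exp r)) ^ 2 : ℝ) : ℂ)
          * (4 * ((Real.sqrt (1 + Real.exp r) : ℝ) : ℂ) ^ 3)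
          = ((((Real.exp r * (2 * Real.sqrt (1 + Real.exp r)) -
          Real.exp r * (2 * (Real.exp r / (2 * Real.sqrt (1 + Real.exp r))))) /
        (2 * Real.sqrt (1 + Real.exp r)) ^ 2) * (4 * Real.sqrt (1 + Real.exp r) ^ 3) : ℝ) : ℂ) := by
            push_cast [-Complex.ofReal_exp]; ring
      _ = ((2 * Real.exp r * Real.sqrt (1 + Real.exp r) ^ 2 - Real.exp r ^ 2 : ℝ) : ℂ) :=
            congrArg (fun x : ℝ => (x : ℂ)) hD1R
      _ = 2 * ((((Real.sqrt (1 + Real.exp r) : ℝ) : ℂ)) ^ 2 - 1)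
            * (((Real.sqrt (1 + Real.exp r) : ℝ) : ℂ)) ^ 2
          - ((((Real.sqrt (1 + Real.exp r) : ℝ) : ℂ)) ^ 2 - 1) ^ 2 := by
            push_cast [-Complex.ofReal_exp]; rw [hs2C]
    have hD2 : ((Real.exp r / (2 * Real.sqrt (1 + Real.exp r)) : ℝ) : ℂ)
          * (2 * ((Real.sqrt (1 + Real.exp r) : ℝ) : ℂ))
        = (((Real.sqrt (1 + Real.exp r) : ℝ) : ℂ)) ^ 2 - 1 := by
      have hD2R : (Real.exp r / (2 * Real.sqrt (1 + Real.exp r)))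
          * (2 * Real.sqrt (1 + Real.exp r)) = Real.exp r :=
        div_mul_cancel₀ _ (by positivity)
      calc ((Real.exp r / (2 * Real.sqrt (1 + Real.exp r)) : ℝ) : ℂ)
          * (2 * ((Real.sqrt (1 + Real.exp r) : ℝ) : ℂ))
          = (((Real.exp r / (2 * Real.sqrt (1 + Real.exp r)))
              * (2 * Real.sqrt (1 + Real.exp r)) : ℝ) : ℂ) := by
            push_cast [-Complex.ofReal_exp]; ring
      _ = ((Real.exp r : ℝ) : ℂ) := congrArg (fun x : ℝ => (x : ℂ)) hD2R
      _ = (((Real.sqrt (1 + Real.exp r) : ℝ) : ℂ)) ^ 2 - 1 := hs2C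
    have hD34 : ((blackHolePotential m r : ℝ) : ℂ)
          * (4 * ((Real.sqrt (1 + Real.exp r) : ℝ) : ℂ) ^ 4)
        = ((((Real.sqrt (1 + Real.exp r) : ℝ) : ℂ)) ^ 2 - 1)
          + 4 * ((m : ℝ) : ℂ) ^ 2 * ((((Real.sqrt (1 + Real.exp r) : ℝ) : ℂ)) ^ 2 - 1)
            * (((Real.sqrt (1 + Real.exp r) : ℝ) : ℂ)) ^ 2 := by
      have hVR : blackHolePotential m r * (4 * Real.sqrt (1 + Real.exp r) ^ 4)
          = Real.exp r + 4 * m ^ 2 * Real.exp r * Real.sqrt (1 + Real.exp r) ^ 2 := by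
        rw [blackHolePotential, show Real.sqrt (1 + Real.exp r) ^ 4
            = (1 + Real.exp r) ^ 2 by rw [show (4:ℕ) = 2*2 from rfl, pow_mul, hsq]]
        have h1e : (0:ℝ) < 1 + Real.exp r := by positivity
        field_simp
        linear_combination (-4 * m ^ 2) * hsq
      calc ((blackHolePotential m r : ℝ) : ℂ)
          * (4 * ((Real.sqrt (1 + Real.exp r) : ℝ) : ℂ) ^ 4)
          = ((blackHolePotential m r * (4 * Real.sqrt (1 + Real.exp r) ^ 4) : ℝ) : ℂ) := by
            push_cast [-Complex.ofReal_exp]; ring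
      _ = ((Real.exp r + 4 * m ^ 2 * Real.exp r * Real.sqrt (1 + Real.exp r) ^ 2 : ℝ) : ℂ) :=
            congrArg (fun x : ℝ => (x : ℂ)) hVR
      _ = ((((Real.sqrt (1 + Real.exp r) : ℝ) : ℂ)) ^ 2 - 1)
          + 4 * ((m : ℝ) : ℂ) ^ 2 * ((((Real.sqrt (1 + Real.exp r) : ℝ) : ℂ)) ^ 2 - 1)
            * (((Real.sqrt (1 + Real.exp r) : ℝ) : ℂ)) ^ 2 := by
            push_cast [-Complex.ofReal_exp]; rw [hs2C]
    rw [E1, E2, E3, E4, hg r t, c1, c2, c3, c4, hs2C]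
    exact bh_key ((m : ℝ) : ℂ) (((Real.sqrt (1 + Real.exp r) : ℝ) : ℂ)) _ _ _
      (f (r, t)) (F1 (r, t)) (fderiv ℝ F1 (r, t) (1, 0)) (fderiv ℝ F2 (r, t) (0, 1))
      hS hE hD1 hD2 hD34
  exact ⟨fun h r t => (main r t).mp (h r t), fun h r t => (main r t).mpr (h r t)⟩
end

section
/- Let m > 0 and k > 0 and ω = √(k² + m²). The transmission amplitude T_k = Γ(1/2−i(k+ω))² / (Γ(−2iω) Γ(1−2ik)) satisfies |T_k|² = (ω/k) · sinh(2πk) sinh(2πω) / cosh²(π(k+ω)). -/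
open Real Complex

/-- `ω = √(k² + m²)`. -/
noncomputable def bhOmega (m k : ℝ) : ℝ := Real.sqrt (k ^ 2 + m ^ 2)

/-- The transmission amplitude `T_k = Γ(1/2−i(k+ω))² / (Γ(−2iω) Γ(1−2ik))`. -/
noncomputable def bhT (m k : ℝ) : ℂ :=
  Complex.Gamma (1 / 2 - Complex.I * ((k : ℂ) + (bhOmega m k : ℂ))) ^ 2 /
    (Complex.Gamma (-(2 * Complex.I * (bhOmega m k : ℂ))) *
      Complex.Gamma (1 - 2 * Complex.I * (k : ℂ)))

lemma mul_conj_abs_sq (z : ℂ) : z * (starRingEnd ℂ) z = ((‖z‖ ^ 2 : ℝ) : ℂ) := by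
  rw [Complex.mul_conj, Complex.sq_norm]

lemma gamma_half_abs_sq (s : ℝ) :
    ‖Complex.Gamma (1/2 - Complex.I * s)‖ ^ 2 = π / Real.cosh (π * s) := by
  have hconj : (starRingEnd ℂ) (1/2 - Complex.I * s) = 1 - (1/2 - Complex.I * s) := by
    simp [Complex.ext_iff]; norm_num
  have h := Complex.Gamma_mul_Gamma_one_sub (1/2 - Complex.I * s)
  rw [← hconj, Complex.Gamma_conj, mul_conj_abs_sq] at h
  have hsin : Complex.sin (π * (1/2 - Complex.I * s)) = (Real.cosh (π * s) : ℂ) := by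
    rw [mul_sub, mul_comm (π : ℂ) (Complex.I * s)]
    rw [show (π : ℂ) * (1/2) = (π/2 : ℂ) by ring]
    rw [show Complex.I * (s:ℂ) * π = ((s:ℂ) * π) * Complex.I by ring]
    rw [Complex.sin_pi_div_two_sub, Complex.cos_mul_I]
    push_cast [Complex.ofReal_cosh]
    ring_nf
  rw [hsin] at h
  have hc : Real.cosh (π * s) ≠ 0 := (Real.cosh_pos _).ne'
  exact_mod_cast h

lemma gamma_neg_two_I_abs_sq (y : ℝ) (hy : 0 < y) :
    ‖Complex.Gamma (-(2 * Complex.I * y))‖ ^ 2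
      = π / (2 * y * Real.sinh (2 * π * y)) := by
  have hsh : Real.sinh (2 * π * y) ≠ 0 := by
    rw [Real.sinh_ne_zero]; positivity
  have hy' : (y : ℂ) ≠ 0 := by exact_mod_cast hy.ne'
  have hw : (2 * Complex.I * (y : ℂ)) ≠ 0 := by simp [Complex.I_ne_zero, hy']
  have key := Complex.Gamma_mul_Gamma_one_sub (-(2 * Complex.I * (y : ℂ)))
  rw [show (1 : ℂ) - -(2 * Complex.I * y) = (2 * Complex.I * y) + 1 by ring,
    Complex.Gamma_add_one _ hw] at key
  have hG : Complex.Gamma (2 * Complex.I * (y : ℂ))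
      = (starRingEnd ℂ) (Complex.Gamma (-(2 * Complex.I * (y : ℂ)))) := by
    rw [← Complex.Gamma_conj]; congr 1; simp [Complex.ext_iff]
  rw [hG] at key
  have key2 : (2 * Complex.I * (y : ℂ)) *
      ((‖Complex.Gamma (-(2 * Complex.I * (y : ℂ)))‖ ^ 2 : ℝ) : ℂ)
      = (π : ℂ) / Complex.sin ((π : ℂ) * (-(2 * Complex.I * y))) := by
    rw [← mul_conj_abs_sq]; linear_combination key
  have hsin : Complex.sin ((π : ℂ) * (-(2 * Complex.I * (y : ℂ))))
      = -((Real.sinh (2 * π * y) : ℝ) : ℂ) * Complex.I := by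
    rw [show (π : ℂ) * (-(2 * Complex.I * y)) = -(((2 * π * y : ℝ) : ℂ) * Complex.I) by
      push_cast; ring, Complex.sin_neg, Complex.sin_mul_I, ← Complex.ofReal_sinh]
    ring
  rw [hsin] at key2
  have hsh' : ((Real.sinh (2 * π * y) : ℝ) : ℂ) ≠ 0 := by exact_mod_cast hsh
  have h0 : (-((Real.sinh (2 * π * y) : ℝ) : ℂ) * Complex.I) ≠ 0 :=
    mul_ne_zero (neg_ne_zero.mpr hsh') Complex.I_ne_zero
  rw [eq_div_iff h0] at key2
  have goalC : ((‖Complex.Gamma (-(2 * Complex.I * (y : ℂ)))‖ ^ 2 : ℝ) : ℂ)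
      = (π : ℂ) / (2 * (y : ℂ) * ((Real.sinh (2 * π * y) : ℝ) : ℂ)) := by
    rw [eq_div_iff (mul_ne_zero (mul_ne_zero two_ne_zero hy') hsh')]
    linear_combination key2 + 2 * (y : ℂ) *
      ((‖Complex.Gamma (-(2 * Complex.I * (y : ℂ)))‖ ^ 2 : ℝ) : ℂ) *
      ((Real.sinh (2 * π * y) : ℝ) : ℂ) * Complex.I_mul_I
  exact_mod_cast goalC

lemma gamma_one_sub_two_I_abs_sq (y : ℝ) (hy : 0 < y) :
    ‖Complex.Gamma (1 - 2 * Complex.I * y)‖ ^ 2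
      = 2 * π * y / Real.sinh (2 * π * y) := by
  have hy' : (y : ℂ) ≠ 0 := by exact_mod_cast hy.ne'
  have hw : (-(2 * Complex.I * (y : ℂ))) ≠ 0 := by simp [Complex.I_ne_zero, hy']
  have h1 : (1 : ℂ) - 2 * Complex.I * y = -(2 * Complex.I * (y : ℂ)) + 1 := by ring
  rw [h1, Complex.Gamma_add_one _ hw, norm_mul, mul_pow, gamma_neg_two_I_abs_sq y hy]
  have habs : ‖-(2 * Complex.I * (y : ℂ))‖ = 2 * y := by
    simp [abs_of_pos hy]
  rw [habs]
  have hsh : Real.sinh (2 * π * y) ≠ 0 := by rw [Real.sinh_ne_zero]; positivity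
  field_simp

/-- `|T_k|² = (ω/k)·sinh(2πk) sinh(2πω)/cosh²(π(k+ω))`. -/
theorem bhT_abs_sq (m k : ℝ) (hm : 0 < m) (hk : 0 < k) :
    ‖bhT m k‖ ^ 2
      = (bhOmega m k / k) *
          (Real.sinh (2 * π * k) * Real.sinh (2 * π * bhOmega m k) /
            Real.cosh (π * (k + bhOmega m k)) ^ 2) := by
  set ω := bhOmega m k with hω
  have hω0 : 0 < ω := Real.sqrt_pos.mpr (by positivity)
  have habs : ‖bhT m k‖ ^ 2
      = ((‖Complex.Gamma (1 / 2 - Complex.I * ((k : ℂ) + (ω : ℂ)))‖ ^ 2) ^ 2) /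
        ((‖Complex.Gamma (-(2 * Complex.I * (ω : ℂ)))‖ ^ 2) *
         (‖Complex.Gamma (1 - 2 * Complex.I * (k : ℂ))‖ ^ 2)) := by
    rw [bhT, norm_div, norm_mul, norm_pow, div_pow, mul_pow]
  rw [habs,
    show ((k : ℂ) + (ω : ℂ)) = ((k + ω : ℝ) : ℂ) by push_cast; ring,
    gamma_half_abs_sq (k + ω), gamma_neg_two_I_abs_sq ω hω0,
    gamma_one_sub_two_I_abs_sq k hk]
  have hc : 0 < Real.cosh (π * (k + ω)) := Real.cosh_pos _
  have hs1 : 0 < Real.sinh (2 * π * k) := Real.sinh_pos_iff.mpr (by positivity)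
  have hs2 : 0 < Real.sinh (2 * π * ω) := Real.sinh_pos_iff.mpr (by positivity)
  have hπ : (0:ℝ) < π := Real.pi_pos
  field_simp
end

section
/- Let m > 0. The Schrödinger operator −d²/dr² + V has no square-integrable eigenfunctions: for every λ ∈ ℂ, every twice continuously differentiable f : ℝ → ℂ satisfying −f''(r) + V(r) f(r) = λ f(r) for all r ∈ ℝ and ∫_ℝ |f(r)|² dr < ∞ is identically zero. -/
open Real Complex MeasureTheory Filter Set Topology

lemma bhp_pos (m : ℝ) (hm : 0 < m) (r : ℝ) : 0 < blackHolePotential m r := by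
  unfold blackHolePotential
  have h1 : 0 < Real.exp r := Real.exp_pos r
  have h2 : 0 < 1 + Real.exp r := by linarith
  positivity

lemma bhp_le (m : ℝ) (r : ℝ) : blackHolePotential m r ≤ 1 / 16 + m ^ 2 := by
  unfold blackHolePotential
  have h1 : 0 < Real.exp r := Real.exp_pos r
  have h2 : 0 < 1 + Real.exp r := by linarith
  have e1 : Real.exp r / (4 * (1 + Real.exp r) ^ 2) ≤ 1 / 16 := by
    rw [div_le_div_iff₀ (by positivity) (by norm_num)]
    nlinarith [sq_nonneg (1 - Real.exp r)]
  have e2 : m ^ 2 * Real.exp r / (1 + Real.exp r) ≤ m ^ 2 := by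
    rw [div_le_iff₀ h2]
    nlinarith [sq_nonneg m]
  linarith

lemma bhp_le_exp (m : ℝ) (r : ℝ) : blackHolePotential m r ≤ (1 / 4 + m ^ 2) * Real.exp r := by
  unfold blackHolePotential
  have h1 : 0 < Real.exp r := Real.exp_pos r
  have h2 : (1:ℝ) ≤ 1 + Real.exp r := by linarith
  have e1 : Real.exp r / (4 * (1 + Real.exp r) ^ 2) ≤ Real.exp r / 4 := by
    apply div_le_div_of_nonneg_left h1.le (by norm_num)
    nlinarith
  have e2 : m ^ 2 * Real.exp r / (1 + Real.exp r) ≤ m ^ 2 * Real.exp r := by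
    apply div_le_self (by positivity) h2
  linarith

lemma bhp_cont (m : ℝ) : Continuous (blackHolePotential m) := by
  unfold blackHolePotential
  fun_prop (disch := intros; first | positivity | (intro r; nlinarith [Real.exp_pos r]))

/-- A continuous integrable function cannot be ≥ δ > 0 on a left ray. -/
lemma aux_not_int_Iic (g : ℝ → ℝ) (hg : Integrable g) (a δ : ℝ) (hδ : 0 < δ)
    (h : ∀ x ≤ a, δ ≤ g x) : False := by
  have hint : IntegrableOn g (Iic a) := hg.integrableOn
  have hconst : Integrable (fun _ : ℝ => δ) (volume.restrict (Iic a)) := by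
    refine Integrable.mono hint aestronglyMeasurable_const ?_
    filter_upwards [ae_restrict_mem measurableSet_Iic] with x hx
    have := h x hx
    rw [Real.norm_eq_abs, Real.norm_eq_abs, abs_of_pos hδ]
    calc δ ≤ g x := this
      _ ≤ |g x| := le_abs_self _
  rcases (integrable_const_iff).1 hconst with h0 | h0
  · exact absurd h0 (ne_of_gt hδ)
  · have h0 := h0.measure_univ_lt_top
    rw [Measure.restrict_apply_univ, Real.volume_Iic] at h0
    exact absurd h0 (lt_irrefl _)

lemma aux_not_int_Ici (g : ℝ → ℝ) (hg : Integrable g) (a δ : ℝ) (hδ : 0 < δ)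
    (h : ∀ x, a ≤ x → δ ≤ g x) : False := by
  have hint : IntegrableOn g (Ici a) := hg.integrableOn
  have hconst : Integrable (fun _ : ℝ => δ) (volume.restrict (Ici a)) := by
    refine Integrable.mono hint aestronglyMeasurable_const ?_
    filter_upwards [ae_restrict_mem measurableSet_Ici] with x hx
    have := h x hx
    rw [Real.norm_eq_abs, Real.norm_eq_abs, abs_of_pos hδ]
    calc δ ≤ g x := this
      _ ≤ |g x| := le_abs_self _
  rcases (integrable_const_iff).1 hconst with h0 | h0
  · exact absurd h0 (ne_of_gt hδ)
  · have h0 := h0.measure_univ_lt_top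
    rw [Measure.restrict_apply_univ, Real.volume_Ici] at h0
    exact absurd h0 (lt_irrefl _)

/-- A differentiable function with integrable derivative has a limit at +∞. -/
lemma aux_tendsto_top (g : ℝ → ℝ) (hdiff : Differentiable ℝ g)
    (hint : Integrable (deriv g)) :
    Tendsto g atTop (𝓝 (g 0 + ∫ x in Ioi 0, deriv g x)) := by
  have key : ∀ b : ℝ, g b = g 0 + ∫ x in (0:ℝ)..b, deriv g x := by
    intro b
    rw [intervalIntegral.integral_deriv_eq_sub (fun x _ => hdiff x)
      hint.intervalIntegrable]
    ring
  have h2 : Tendsto (fun b : ℝ => g 0 + ∫ x in (0:ℝ)..b, deriv g x) atTop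
      (𝓝 (g 0 + ∫ x in Ioi 0, deriv g x)) :=
    tendsto_const_nhds.add
      (intervalIntegral_tendsto_integral_Ioi 0 hint.integrableOn tendsto_id)
  exact h2.congr (fun b => (key b).symm)

lemma aux_tendsto_bot (g : ℝ → ℝ) (hdiff : Differentiable ℝ g)
    (hint : Integrable (deriv g)) :
    Tendsto g atBot (𝓝 (g 0 - ∫ x in Iic 0, deriv g x)) := by
  have key : ∀ b : ℝ, g b = g 0 - ∫ x in b..(0:ℝ), deriv g x := by
    intro b
    rw [intervalIntegral.integral_deriv_eq_sub (fun x _ => hdiff x)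
      hint.intervalIntegrable]
    ring
  have h2 : Tendsto (fun b : ℝ => g 0 - ∫ x in b..(0:ℝ), deriv g x) atBot
      (𝓝 (g 0 - ∫ x in Iic 0, deriv g x)) :=
    tendsto_const_nhds.sub
      (intervalIntegral_tendsto_integral_Iic 0 hint.integrableOn tendsto_id)
  exact h2.congr (fun b => (key b).symm)

/-- A nonnegative integrable function whose limit at +∞ exists has limit 0. -/
lemma aux_limit_zero_top (g : ℝ → ℝ) (hpos : ∀ x, 0 ≤ g x) (hg : Integrable g)
    (c : ℝ) (h : Tendsto g atTop (𝓝 c)) : c = 0 := by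
  by_contra hc
  have hc0 : 0 ≤ c := ge_of_tendsto h (Eventually.of_forall hpos)
  have hcpos : 0 < c := lt_of_le_of_ne hc0 (Ne.symm hc)
  have hev : ∀ᶠ x in atTop, c / 2 ≤ g x := h.eventually (eventually_ge_nhds (by linarith))
  rcases eventually_atTop.1 hev with ⟨a, ha⟩
  exact aux_not_int_Ici g hg a (c / 2) (by linarith) ha

lemma aux_limit_zero_bot (g : ℝ → ℝ) (hpos : ∀ x, 0 ≤ g x) (hg : Integrable g)
    (c : ℝ) (h : Tendsto g atBot (𝓝 c)) : c = 0 := by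
  by_contra hc
  have hc0 : 0 ≤ c := ge_of_tendsto h (Eventually.of_forall hpos)
  have hcpos : 0 < c := lt_of_le_of_ne hc0 (Ne.symm hc)
  have hev : ∀ᶠ x in atBot, c / 2 ≤ g x := h.eventually (eventually_ge_nhds (by linarith))
  rcases eventually_atBot.1 hev with ⟨a, ha⟩
  exact aux_not_int_Iic g hg a (c / 2) (by linarith) (fun x hx => ha x hx)

/-- A continuous nonnegative function with zero integral vanishes. -/
lemma aux_eqzero (g : ℝ → ℝ) (hcont : Continuous g) (hpos : ∀ x, 0 ≤ g x)
    (hg : Integrable g) (h : (∫ x, g x) = 0) : ∀ x, g x = 0 := by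
  have h1 := (integral_eq_zero_iff_of_nonneg hpos hg).1 h
  have h2 : g = 0 := (Continuous.ae_eq_iff_eq volume hcont continuous_const).1 h1
  intro x; exact congrFun h2 x

/-- FTC on ℝ with vanishing limits. -/
lemma aux_integral_deriv_zero (g : ℝ → ℝ) (hdiff : Differentiable ℝ g)
    (hint : Integrable (deriv g))
    (htop : Tendsto g atTop (𝓝 0)) (hbot : Tendsto g atBot (𝓝 0)) :
    (∫ x, deriv g x) = 0 := by
  have h1 := aux_tendsto_top g hdiff hint
  have h2 := aux_tendsto_bot g hdiff hint
  have e1 : g 0 + ∫ x in Ioi 0, deriv g x = 0 := tendsto_nhds_unique h1 htop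
  have e2 : g 0 - ∫ x in Iic 0, deriv g x = 0 := tendsto_nhds_unique h2 hbot
  have h3 := intervalIntegral.integral_Iic_add_Ioi (b := 0) (μ := volume)
    hint.integrableOn hint.integrableOn
  linarith [h3]

lemma aux_hasDerivAt_conj {h : ℝ → ℂ} {h' : ℂ} {r : ℝ} (hh : HasDerivAt h h' r) :
    HasDerivAt (fun x => (starRingEnd ℂ) (h x)) ((starRingEnd ℂ) h') r := by
  have := (Complex.conjCLE.toContinuousLinearMap.hasFDerivAt (x := h r)).comp_hasDerivAt r hh
  simpa [Function.comp_def] using this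

lemma aux_hasDerivAt_re {h : ℝ → ℂ} {h' : ℂ} {r : ℝ} (hh : HasDerivAt h h' r) :
    HasDerivAt (fun x => (h x).re) h'.re r := by
  have := (Complex.reCLM.hasFDerivAt (x := h r)).comp_hasDerivAt r hh
  simpa [Function.comp_def] using this

lemma aux_hasDerivAt_im {h : ℝ → ℂ} {h' : ℂ} {r : ℝ} (hh : HasDerivAt h h' r) :
    HasDerivAt (fun x => (h x).im) h'.im r := by
  have := (Complex.imCLM.hasFDerivAt (x := h r)).comp_hasDerivAt r hh
  simpa [Function.comp_def] using this

lemma aux_conj_mul_self (z : ℂ) : (starRingEnd ℂ) z * z = ((‖z‖^2 : ℝ) : ℂ) := by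
  have : (‖z‖^2 : ℝ) = Complex.normSq z := by
    rw [Complex.normSq_eq_norm_sq]
  rw [this, Complex.normSq_eq_conj_mul_self]

lemma aux_hasDerivAt_normSq {h : ℝ → ℂ} {h' : ℂ} {r : ℝ} (hh : HasDerivAt h h' r) :
    HasDerivAt (fun x => ‖h x‖^2) (2 * ((starRingEnd ℂ) (h r) * h').re) r := by
  have h1 : HasDerivAt (fun x => (starRingEnd ℂ) (h x) * h x)
      ((starRingEnd ℂ) h' * h r + (starRingEnd ℂ) (h r) * h') r :=
    (aux_hasDerivAt_conj hh).mul hh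
  have h2 := aux_hasDerivAt_re h1
  have e : ((starRingEnd ℂ) h' * h r + (starRingEnd ℂ) (h r) * h').re
      = 2 * ((starRingEnd ℂ) (h r) * h').re := by
    have : (starRingEnd ℂ) h' * h r = (starRingEnd ℂ) ((starRingEnd ℂ) (h r) * h') := by
      simp [mul_comm]
    rw [this, Complex.add_re, Complex.conj_re]
    ring
  rw [e] at h2
  have efun : (fun x => ((starRingEnd ℂ) (h x) * h x).re) = fun x => ‖h x‖^2 := by
    funext x
    rw [aux_conj_mul_self, Complex.ofReal_re]
  rwa [efun] at h2

lemma aux_re_conj_comm (a b : ℂ) :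
    ((starRingEnd ℂ) a * b).re = ((starRingEnd ℂ) b * a).re := by
  simp [Complex.mul_re, Complex.conj_re, Complex.conj_im]
  ring

lemma aux_abs_re_le (a b : ℂ) : |((starRingEnd ℂ) a * b).re| ≤ (‖a‖^2 + ‖b‖^2) / 2 := by
  have h1 : |((starRingEnd ℂ) a * b).re| ≤ ‖(starRingEnd ℂ) a * b‖ := Complex.abs_re_le_norm _
  have h2 : ‖(starRingEnd ℂ) a * b‖ = ‖a‖ * ‖b‖ := by
    rw [norm_mul, RCLike.norm_conj]
  nlinarith [sq_nonneg (‖a‖ - ‖b‖), norm_nonneg a, norm_nonneg b]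

lemma aux_abs_im_le (a b : ℂ) : |((starRingEnd ℂ) a * b).im| ≤ (‖a‖^2 + ‖b‖^2) / 2 := by
  have h1 : |((starRingEnd ℂ) a * b).im| ≤ ‖(starRingEnd ℂ) a * b‖ := Complex.abs_im_le_norm _
  have h2 : ‖(starRingEnd ℂ) a * b‖ = ‖a‖ * ‖b‖ := by
    rw [norm_mul, RCLike.norm_conj]
  nlinarith [sq_nonneg (‖a‖ - ‖b‖), norm_nonneg a, norm_nonneg b]

noncomputable def auxU (f : ℝ → ℂ) (r : ℝ) : ℝ := ‖f r‖^2
noncomputable def auxQ (f : ℝ → ℂ) (r : ℝ) : ℝ := ‖deriv f r‖^2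
noncomputable def auxP (f : ℝ → ℂ) (r : ℝ) : ℝ := ((starRingEnd ℂ) (f r) * deriv f r).re
noncomputable def auxW (f : ℝ → ℂ) (r : ℝ) : ℝ := ((starRingEnd ℂ) (f r) * deriv f r).im

section odefacts

variable {Vf : ℝ → ℝ} {lam : ℂ} {f : ℝ → ℂ}

lemma derU (hfd : Differentiable ℝ f) (r : ℝ) :
    HasDerivAt (auxU f) (2 * auxP f r) r :=
  aux_hasDerivAt_normSq (hfd r).hasDerivAt

lemma derQ (hfd1 : Differentiable ℝ (deriv f)) (r : ℝ) :
    HasDerivAt (auxQ f) (2 * ((starRingEnd ℂ) (deriv f r) * deriv (deriv f) r).re) r :=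
  aux_hasDerivAt_normSq (hfd1 r).hasDerivAt

lemma derG (hfd : Differentiable ℝ f) (hfd1 : Differentiable ℝ (deriv f))
    (hode : ∀ r, deriv (deriv f) r = ((Vf r : ℂ) - lam) * f r) (r : ℝ) :
    HasDerivAt (fun x => (starRingEnd ℂ) (f x) * deriv f x)
      (((auxQ f r : ℝ) : ℂ) + (((Vf r : ℝ) : ℂ) - lam) * ((auxU f r : ℝ) : ℂ)) r := by
  have h := (aux_hasDerivAt_conj (hfd r).hasDerivAt).mul (hfd1 r).hasDerivAt
  have e : (starRingEnd ℂ) (deriv f r) * deriv f r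
      + (starRingEnd ℂ) (f r) * deriv (deriv f) r
      = ((auxQ f r : ℝ) : ℂ) + (((Vf r : ℝ) : ℂ) - lam) * ((auxU f r : ℝ) : ℂ) := by
    rw [hode r]
    rw [show (starRingEnd ℂ) (f r) * ((((Vf r : ℝ) : ℂ) - lam) * f r)
        = (((Vf r : ℝ) : ℂ) - lam) * ((starRingEnd ℂ) (f r) * f r) by ring]
    rw [aux_conj_mul_self, aux_conj_mul_self]
    rfl
  rw [e] at h
  exact h

lemma derP (hfd : Differentiable ℝ f) (hfd1 : Differentiable ℝ (deriv f))
    (hode : ∀ r, deriv (deriv f) r = ((Vf r : ℂ) - lam) * f r) (r : ℝ) :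
    HasDerivAt (auxP f) (auxQ f r + (Vf r - lam.re) * auxU f r) r := by
  have h := aux_hasDerivAt_re (derG hfd hfd1 hode r)
  have e : (((auxQ f r : ℝ) : ℂ) + (((Vf r : ℝ) : ℂ) - lam) * ((auxU f r : ℝ) : ℂ)).re
      = auxQ f r + (Vf r - lam.re) * auxU f r := by
    simp [Complex.add_re, Complex.mul_re, Complex.sub_re, Complex.sub_im]
  rw [e] at h
  exact h

lemma derW (hfd : Differentiable ℝ f) (hfd1 : Differentiable ℝ (deriv f))
    (hode : ∀ r, deriv (deriv f) r = ((Vf r : ℂ) - lam) * f r) (r : ℝ) :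
    HasDerivAt (auxW f) (-lam.im * auxU f r) r := by
  have h := aux_hasDerivAt_im (derG hfd hfd1 hode r)
  have e : (((auxQ f r : ℝ) : ℂ) + (((Vf r : ℝ) : ℂ) - lam) * ((auxU f r : ℝ) : ℂ)).im
      = -lam.im * auxU f r := by
    simp [Complex.add_im, Complex.mul_im, Complex.sub_re, Complex.sub_im]
  rw [e] at h
  exact h

end odefacts

lemma aux_Ebound (s V P n1 n2 E : ℝ) (hs : 0 < s) (hV : 0 ≤ V)
    (hP : |P| ≤ n1 * n2) (hE : s^2 * n1^2 + n2^2 = E) :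
    |2 * V * P| ≤ V / s * E := by
  have h1 : 0 ≤ n1 * n2 := le_trans (abs_nonneg P) hP
  have h2 : 2 * s * (n1 * n2) ≤ E := by nlinarith [sq_nonneg (s * n1 - n2)]
  have h3 : 2 * |P| ≤ E / s := by
    rw [le_div_iff₀ hs]
    nlinarith
  rw [abs_mul, abs_mul, _root_.abs_two, _root_.abs_of_nonneg hV]
  calc 2 * V * |P| = V * (2 * |P|) := by ring
    _ ≤ V * (E / s) := mul_le_mul_of_nonneg_left h3 hV
    _ = V / s * E := by ring
set_option maxHeartbeats 2000000 in
/-- the Schrödinger operator `−d²/dr² + V` has no square-integrable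
eigenfunctions. -/
theorem bh_no_L2_eigenfunctions (m : ℝ) (hm : 0 < m) (lam : ℂ) (f : ℝ → ℂ)
    (hf : ContDiff ℝ 2 f)
    (heq : ∀ r : ℝ,
      -(deriv (deriv f) r) + (blackHolePotential m r : ℂ) * f r = lam * f r)
    (hL2 : Integrable (fun r : ℝ => ‖f r‖ ^ 2) volume) :
    ∀ r : ℝ, f r = 0 := by
  classical
  -- differentiability bookkeeping
  have hf2 : ContDiff ℝ ((1:ℕ) + 1) f := by exact_mod_cast hf
  have hfd : Differentiable ℝ f := hf.differentiable (by norm_num)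
  have hf1 : ContDiff ℝ 1 (deriv f) := by
    rw [contDiff_succ_iff_deriv] at hf2
    exact_mod_cast hf2.2.2
  have hfd1 : Differentiable ℝ (deriv f) := hf1.differentiable (by norm_num)
  have hcd2 : Continuous (deriv (deriv f)) := hf1.continuous_deriv le_rfl
  have hode : ∀ r, deriv (deriv f) r = ((blackHolePotential m r : ℂ) - lam) * f r := by
    intro r
    linear_combination (-1 : ℂ) * heq r
  -- continuity of the auxiliary functions
  have hUcont : Continuous (auxU f) := by unfold auxU; fun_prop
  have hQcont : Continuous (auxQ f) := by unfold auxQ; fun_prop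
  have hPcont : Continuous (auxP f) := by unfold auxP; fun_prop
  have hWcont : Continuous (auxW f) := by unfold auxW; fun_prop
  have hUnn : ∀ x, 0 ≤ auxU f x := fun x => sq_nonneg _
  have hQnn : ∀ x, 0 ≤ auxQ f x := fun x => sq_nonneg _
  have hUint : Integrable (auxU f) volume := hL2
  -- derivative formulas
  have hPder : ∀ r, HasDerivAt (auxP f)
      (auxQ f r + (blackHolePotential m r - lam.re) * auxU f r) r :=
    derP hfd hfd1 hode
  have hWder : ∀ r, HasDerivAt (auxW f) (-lam.im * auxU f r) r :=
    derW hfd hfd1 hode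
  have hUder : ∀ r, HasDerivAt (auxU f) (2 * auxP f r) r := derU hfd
  have hQder : ∀ r, HasDerivAt (auxQ f)
      (2 * ((starRingEnd ℂ) (deriv f r) * deriv (deriv f) r).re) r := derQ hfd1
  -- pointwise bound constants
  set C0 : ℝ := 1 / 16 + m ^ 2 with hC0
  have hC0nn : 0 ≤ C0 := by positivity
  have hVnn : ∀ r, 0 ≤ blackHolePotential m r := fun r => (bhp_pos m hm r).le
  have hVle : ∀ r, blackHolePotential m r ≤ C0 := fun r => bhp_le m r
  -- integrability of (V - α) U and V U
  have hVUint : Integrable (fun r => blackHolePotential m r * auxU f r) volume := by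
    refine Integrable.mono' (hUint.const_mul C0) ?_ ?_
    · exact ((bhp_cont m).mul hUcont).aestronglyMeasurable
    · refine ae_of_all _ fun r => ?_
      rw [Real.norm_eq_abs, _root_.abs_of_nonneg (mul_nonneg (hVnn r) (hUnn r))]
      exact mul_le_mul_of_nonneg_right (hVle r) (hUnn r)
  have hVaUint : Integrable (fun r => (blackHolePotential m r - lam.re) * auxU f r) volume := by
    refine Integrable.mono' (hUint.const_mul (C0 + |lam.re|)) ?_ ?_
    · exact (((bhp_cont m).sub continuous_const).mul hUcont).aestronglyMeasurable
    · refine ae_of_all _ fun r => ?_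
      rw [Real.norm_eq_abs, abs_mul, _root_.abs_of_nonneg (hUnn r)]
      refine mul_le_mul_of_nonneg_right ?_ (hUnn r)
      calc |blackHolePotential m r - lam.re| ≤ |blackHolePotential m r| + |lam.re| := abs_sub _ _
        _ ≤ C0 + |lam.re| := by
            rw [_root_.abs_of_nonneg (hVnn r)]
            exact add_le_add_left (hVle r) _
  -- interval integrability helpers
  have hQii : ∀ a b : ℝ, IntervalIntegrable (auxQ f) volume a b :=
    fun a b => hQcont.intervalIntegrable a b
  have hVaUii : ∀ a b : ℝ, IntervalIntegrable
      (fun r => (blackHolePotential m r - lam.re) * auxU f r) volume a b :=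
    fun a b => (((bhp_cont m).sub continuous_const).mul hUcont).intervalIntegrable a b
  have hmonoQ : Monotone (fun b => ∫ x in (0:ℝ)..b, auxQ f x) := by
    intro b b' hbb
    have hadd := intervalIntegral.integral_add_adjacent_intervals (hQii 0 b) (hQii b b')
    have hnn : 0 ≤ ∫ x in b..b', auxQ f x :=
      intervalIntegral.integral_nonneg hbb fun u _ => hQnn u
    simp only
    linarith
  have hQnorm : ∀ x : ℝ, ‖auxQ f x‖ = auxQ f x := fun x => Real.norm_of_nonneg (hQnn x)
  set M := ∫ x, |(blackHolePotential m x - lam.re) * auxU f x| with hMdef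
  have hVaUabs : Integrable (fun x => |(blackHolePotential m x - lam.re) * auxU f x|) volume :=
    hVaUint.abs
  have hMbound : ∀ b : ℝ,
      |∫ x in (0:ℝ)..b, (blackHolePotential m x - lam.re) * auxU f x| ≤ M := by
    have key : ∀ a b : ℝ, a ≤ b →
        |∫ x in a..b, (blackHolePotential m x - lam.re) * auxU f x| ≤ M := by
      intro a b hab
      calc |∫ x in a..b, (blackHolePotential m x - lam.re) * auxU f x|
          ≤ ∫ x in a..b, |(blackHolePotential m x - lam.re) * auxU f x| :=
            intervalIntegral.abs_integral_le_integral_abs hab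
        _ = ∫ x in Ioc a b, |(blackHolePotential m x - lam.re) * auxU f x| :=
            intervalIntegral.integral_of_le hab
        _ ≤ M := setIntegral_le_integral hVaUabs (ae_of_all _ fun x => abs_nonneg _)
    intro b
    rcases le_total 0 b with hb | hb
    · exact key 0 b hb
    · rw [intervalIntegral.integral_symm, abs_neg]
      exact key b 0 hb
  have hPeq : ∀ b : ℝ, auxP f b = auxP f 0 + (∫ x in (0:ℝ)..b, auxQ f x)
      + ∫ x in (0:ℝ)..b, (blackHolePotential m x - lam.re) * auxU f x := by
    intro b
    have hdP : deriv (auxP f)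
        = fun x => auxQ f x + (blackHolePotential m x - lam.re) * auxU f x :=
      funext fun x => (hPder x).deriv
    have hii : IntervalIntegrable (deriv (auxP f)) volume 0 b := by
      rw [hdP]; exact (hQii 0 b).add (hVaUii 0 b)
    have hftc := intervalIntegral.integral_deriv_eq_sub
      (fun x _ => (hPder x).differentiableAt) hii
    rw [hdP, intervalIntegral.integral_add (hQii 0 b) (hVaUii 0 b)] at hftc
    linarith
  -- Step (i): Q is integrable
  have keyRight : IntegrableOn (auxQ f) (Ioi (0:ℝ)) volume := by
    by_contra hn
    have htendJ : Tendsto (fun b => ∫ x in (0:ℝ)..b, auxQ f x) atTop atTop := by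
      refine tendsto_atTop_atTop_of_monotone' hmonoQ ?_
      intro hbdd
      obtain ⟨I, hI⟩ := hbdd
      refine hn (integrableOn_Ioi_of_intervalIntegral_norm_bounded I 0
        (fun i : ℝ => hQcont.integrableOn_Ioc) tendsto_id ?_)
      filter_upwards with i
      simp only [hQnorm]
      exact hI (mem_range_self i)
    have hPtend : Tendsto (auxP f) atTop atTop := by
      refine tendsto_atTop_mono' atTop ?_
        (tendsto_atTop_add_const_left _ (auxP f 0 - M) htendJ)
      filter_upwards with b
      linarith [abs_le.1 (hMbound b), hPeq b]
    obtain ⟨b0, hb0⟩ := eventually_atTop.1 (hPtend.eventually_ge_atTop 1)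
    have hmono2 : MonotoneOn (fun b => auxU f b - 2 * b) (Ici b0) := by
      refine monotoneOn_of_deriv_nonneg (convex_Ici b0) ?_ ?_ ?_
      · exact (hUcont.sub (continuous_const.mul continuous_id)).continuousOn
      · intro x _
        have hlin : HasDerivAt (fun b : ℝ => 2 * b) 2 x := by
          simpa using (hasDerivAt_id x).const_mul (2:ℝ)
        exact ((hUder x).sub hlin).differentiableAt.differentiableWithinAt
      · intro x hx
        rw [interior_Ici] at hx
        have hlin : HasDerivAt (fun b : ℝ => 2 * b) 2 x := by
          simpa using (hasDerivAt_id x).const_mul (2:ℝ)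
        rw [HasDerivAt.deriv (f := fun b => auxU f b - 2 * b) ((hUder x).sub hlin)]
        have := hb0 x (le_of_lt hx)
        linarith
    refine aux_not_int_Ici (auxU f) hUint (b0 + 1) 1 one_pos (fun x hx => ?_)
    have hxb0 : b0 ≤ x := by linarith
    have h1 := hmono2 (self_mem_Ici) (mem_Ici.2 hxb0) hxb0
    simp only at h1
    have := hUnn b0
    linarith
  have keyLeft : IntegrableOn (auxQ f) (Iic (0:ℝ)) volume := by
    by_contra hn
    have htendJ : Tendsto (fun b => ∫ x in (0:ℝ)..b, auxQ f x) atBot atBot := by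
      refine tendsto_atBot_atBot_of_monotone' hmonoQ ?_
      intro hbdd
      obtain ⟨I, hI⟩ := hbdd
      refine hn (integrableOn_Iic_of_intervalIntegral_norm_bounded (-I) 0
        (fun i : ℝ => hQcont.integrableOn_Ioc) tendsto_id ?_)
      filter_upwards with i
      simp only [hQnorm]
      have h1 : I ≤ ∫ x in (0:ℝ)..i, auxQ f x := hI (mem_range_self i)
      rw [intervalIntegral.integral_symm]
      simp only [id_eq]
      linarith
    have hPtend : Tendsto (auxP f) atBot atBot := by
      refine tendsto_atBot_mono' atBot ?_
        (tendsto_atBot_add_const_left _ (auxP f 0 + M) htendJ)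
      filter_upwards with b
      linarith [abs_le.1 (hMbound b), hPeq b]
    obtain ⟨a0, ha0⟩ := eventually_atBot.1 (hPtend.eventually_le_atBot (-1))
    have hmono2 : MonotoneOn (fun b => -auxU f b - 2 * b) (Iic a0) := by
      refine monotoneOn_of_deriv_nonneg (convex_Iic a0) ?_ ?_ ?_
      · exact ((hUcont.neg).sub (continuous_const.mul continuous_id)).continuousOn
      · intro x _
        have hlin : HasDerivAt (fun b : ℝ => 2 * b) 2 x := by
          simpa using (hasDerivAt_id x).const_mul (2:ℝ)
        exact (((hUder x).neg).sub hlin).differentiableAt.differentiableWithinAt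
      · intro x hx
        rw [interior_Iic] at hx
        have hlin : HasDerivAt (fun b : ℝ => 2 * b) 2 x := by
          simpa using (hasDerivAt_id x).const_mul (2:ℝ)
        rw [HasDerivAt.deriv (f := fun b => -auxU f b - 2 * b) (((hUder x).neg).sub hlin)]
        have := ha0 x (le_of_lt hx)
        linarith
    refine aux_not_int_Iic (auxU f) hUint (a0 - 1) 1 one_pos (fun x hx => ?_)
    have hxa0 : x ≤ a0 := by linarith
    have h1 := hmono2 (mem_Iic.2 hxa0) (self_mem_Iic) hxa0
    simp only at h1
    have := hUnn a0
    linarith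
  have hQint : Integrable (auxQ f) volume := by
    have hun := keyLeft.union keyRight
    rwa [Iic_union_Ioi, integrableOn_univ] at hun
    -- derivative formulas as functions, integrability of derivatives
  have hUQint : Integrable (fun r => auxU f r + auxQ f r) volume := hUint.add hQint
  have hderivU : deriv (auxU f) = fun r => 2 * auxP f r :=
    funext fun r => (hUder r).deriv
  have hderivQ : deriv (auxQ f)
      = fun r => 2 * ((starRingEnd ℂ) (deriv f r) * deriv (deriv f) r).re :=
    funext fun r => (hQder r).deriv
  have hderivP : deriv (auxP f)
      = fun r => auxQ f r + (blackHolePotential m r - lam.re) * auxU f r :=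
    funext fun r => (hPder r).deriv
  have hderivW : deriv (auxW f) = fun r => -lam.im * auxU f r :=
    funext fun r => (hWder r).deriv
  have habsP : ∀ r, |auxP f r| ≤ (auxU f r + auxQ f r) / 2 := by
    intro r; unfold auxP auxU auxQ; exact aux_abs_re_le _ _
  have habsW : ∀ r, |auxW f r| ≤ (auxU f r + auxQ f r) / 2 := by
    intro r; unfold auxW auxU auxQ; exact aux_abs_im_le _ _
  set Cb : ℝ := C0 + ‖lam‖ with hCb
  have hCbnn : 0 ≤ Cb := add_nonneg hC0nn (norm_nonneg lam)
  have hfpp : ∀ r, ‖deriv (deriv f) r‖ ≤ Cb * ‖f r‖ := by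
    intro r
    rw [hode r, norm_mul]
    refine mul_le_mul_of_nonneg_right ?_ (norm_nonneg _)
    calc ‖(blackHolePotential m r : ℂ) - lam‖
        ≤ ‖(blackHolePotential m r : ℂ)‖ + ‖lam‖ := norm_sub_le _ _
      _ ≤ Cb := by
          rw [Complex.norm_real, Real.norm_eq_abs, _root_.abs_of_nonneg (hVnn r)]
          exact add_le_add_left (hVle r) _
  have hU'int : Integrable (deriv (auxU f)) volume := by
    rw [hderivU]
    refine Integrable.mono' hUQint (continuous_const.mul hPcont).aestronglyMeasurable
      (ae_of_all _ fun r => ?_)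
    rw [Real.norm_eq_abs, abs_mul]
    have := habsP r
    rw [_root_.abs_two]
    linarith [abs_nonneg (auxP f r)]
  have hQ'int : Integrable (deriv (auxQ f)) volume := by
    rw [hderivQ]
    have hcontQ' : Continuous (fun r => 2 * ((starRingEnd ℂ) (deriv f r) * deriv (deriv f) r).re) := by
      apply continuous_const.mul
      apply Complex.continuous_re.comp
      exact (continuous_star.comp hfd1.continuous).mul hcd2
    refine Integrable.mono' (hUQint.const_mul Cb) hcontQ'.aestronglyMeasurable
      (ae_of_all _ fun r => ?_)
    rw [Real.norm_eq_abs, abs_mul, _root_.abs_two]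
    have h1 : |((starRingEnd ℂ) (deriv f r) * deriv (deriv f) r).re|
        ≤ ‖deriv f r‖ * ‖deriv (deriv f) r‖ := by
      calc |((starRingEnd ℂ) (deriv f r) * deriv (deriv f) r).re|
          ≤ ‖(starRingEnd ℂ) (deriv f r) * deriv (deriv f) r‖ := Complex.abs_re_le_norm _
        _ = ‖deriv f r‖ * ‖deriv (deriv f) r‖ := by rw [norm_mul, RCLike.norm_conj]
    have h2 := hfpp r
    have h3 : ‖deriv f r‖ * ‖deriv (deriv f) r‖ ≤ Cb * (‖f r‖ * ‖deriv f r‖) := by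
      calc ‖deriv f r‖ * ‖deriv (deriv f) r‖ ≤ ‖deriv f r‖ * (Cb * ‖f r‖) :=
            mul_le_mul_of_nonneg_left h2 (norm_nonneg _)
        _ = Cb * (‖f r‖ * ‖deriv f r‖) := by ring
    have h4 : 2 * (‖f r‖ * ‖deriv f r‖) ≤ auxU f r + auxQ f r := by
      unfold auxU auxQ
      nlinarith [sq_nonneg (‖f r‖ - ‖deriv f r‖)]
    nlinarith [abs_nonneg (((starRingEnd ℂ) (deriv f r) * deriv (deriv f) r).re),
      norm_nonneg (deriv f r), norm_nonneg (f r), mul_nonneg (norm_nonneg (f r)) (norm_nonneg (deriv f r))]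
  have hP'int : Integrable (deriv (auxP f)) volume := by
    rw [hderivP]; exact hQint.add hVaUint
  have hW'int : Integrable (deriv (auxW f)) volume := by
    rw [hderivW]; exact hUint.const_mul _
  -- limits at ±∞
  have hUtop : Tendsto (auxU f) atTop (𝓝 0) := by
    have h := aux_tendsto_top (auxU f) (fun r => (hUder r).differentiableAt) hU'int
    have hz := aux_limit_zero_top (auxU f) hUnn hUint _ h
    rwa [hz] at h
  have hUbot : Tendsto (auxU f) atBot (𝓝 0) := by
    have h := aux_tendsto_bot (auxU f) (fun r => (hUder r).differentiableAt) hU'int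
    have hz := aux_limit_zero_bot (auxU f) hUnn hUint _ h
    rwa [hz] at h
  have hQtop : Tendsto (auxQ f) atTop (𝓝 0) := by
    have h := aux_tendsto_top (auxQ f) (fun r => (hQder r).differentiableAt) hQ'int
    have hz := aux_limit_zero_top (auxQ f) hQnn hQint _ h
    rwa [hz] at h
  have hQbot : Tendsto (auxQ f) atBot (𝓝 0) := by
    have h := aux_tendsto_bot (auxQ f) (fun r => (hQder r).differentiableAt) hQ'int
    have hz := aux_limit_zero_bot (auxQ f) hQnn hQint _ h
    rwa [hz] at h
  have hsqTop : Tendsto (fun r => (auxU f r + auxQ f r) / 2) atTop (𝓝 0) := by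
    have := (hUtop.add hQtop).div_const (2:ℝ)
    simpa using this
  have hsqBot : Tendsto (fun r => (auxU f r + auxQ f r) / 2) atBot (𝓝 0) := by
    have := (hUbot.add hQbot).div_const (2:ℝ)
    simpa using this
  have hPtop0 : Tendsto (auxP f) atTop (𝓝 0) := by
    refine squeeze_zero_norm (fun r => ?_) hsqTop
    rw [Real.norm_eq_abs]; exact habsP r
  have hPbot0 : Tendsto (auxP f) atBot (𝓝 0) := by
    refine squeeze_zero_norm (fun r => ?_) hsqBot
    rw [Real.norm_eq_abs]; exact habsP r
  have hWtop0 : Tendsto (auxW f) atTop (𝓝 0) := by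
    refine squeeze_zero_norm (fun r => ?_) hsqTop
    rw [Real.norm_eq_abs]; exact habsW r
  have hWbot0 : Tendsto (auxW f) atBot (𝓝 0) := by
    refine squeeze_zero_norm (fun r => ?_) hsqBot
    rw [Real.norm_eq_abs]; exact habsW r
  -- integral identities
  have hintP0 : (∫ x, deriv (auxP f) x) = 0 :=
    aux_integral_deriv_zero _ (fun r => (hPder r).differentiableAt) hP'int hPtop0 hPbot0
  have hintW0 : (∫ x, deriv (auxW f) x) = 0 :=
    aux_integral_deriv_zero _ (fun r => (hWder r).differentiableAt) hW'int hWtop0 hWbot0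
  have hEQ2 : lam.im * (∫ x, auxU f x) = 0 := by
    have hintW0' : (∫ x, -lam.im * auxU f x) = 0 := by
      rw [← hintW0, hderivW]
    rw [integral_const_mul] at hintW0'
    linarith [hintW0']
  have hEQ1 : (∫ x, auxQ f x) + (∫ x, blackHolePotential m x * auxU f x)
      = lam.re * ∫ x, auxU f x := by
    have hintP0' : (∫ x, (auxQ f x
        + (blackHolePotential m x * auxU f x - lam.re * auxU f x))) = 0 := by
      rw [← hintP0, hderivP]
      congr 1
      funext x
      ring
    have hsub : Integrable (fun x => blackHolePotential m x * auxU f x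
        - lam.re * auxU f x) volume := hVUint.sub (hUint.const_mul lam.re)
    have hcm : Integrable (fun x => lam.re * auxU f x) volume := hUint.const_mul lam.re
    rw [integral_add hQint hsub, integral_sub hVUint hcm] at hintP0'
    have e2 : (∫ x, lam.re * auxU f x) = lam.re * ∫ x, auxU f x := integral_const_mul _ _
    rw [e2] at hintP0'
    linarith
    -- final case analysis
  by_cases hU0 : (∫ x, auxU f x) = 0
  · intro r
    have hz := aux_eqzero (auxU f) hUcont hUnn hUint hU0 r
    have hnorm : ‖f r‖ = 0 := by
      have h2 : ‖f r‖ ^ 2 = 0 := hz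
      nlinarith [norm_nonneg (f r)]
    exact norm_eq_zero.mp hnorm
  · exfalso
    have hUposI : 0 < ∫ x, auxU f x :=
      lt_of_le_of_ne (integral_nonneg hUnn) (Ne.symm hU0)
    have hbeta : lam.im = 0 := by
      rcases mul_eq_zero.mp hEQ2 with h | h
      · exact h
      · exact absurd h hU0
    have hVUnn : ∀ x, 0 ≤ blackHolePotential m x * auxU f x :=
      fun x => mul_nonneg (hVnn x) (hUnn x)
    have hVUpos : 0 < ∫ x, blackHolePotential m x * auxU f x := by
      rcases (integral_nonneg (f := fun x => blackHolePotential m x * auxU f x) hVUnn).lt_or_eq with h | h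
      · exact h
      · exfalso
        have hzz := aux_eqzero _ ((bhp_cont m).mul hUcont) hVUnn hVUint h.symm
        have hUz : ∀ x, auxU f x = 0 := fun x =>
          (mul_eq_zero.mp (hzz x)).resolve_left (ne_of_gt (bhp_pos m hm x))
        exact hU0 (integral_eq_zero_of_ae (Eventually.of_forall hUz))
    have hQinn : 0 ≤ ∫ x, auxQ f x := integral_nonneg hQnn
    have halpha : 0 < lam.re := by nlinarith [hEQ1, hUposI, hVUpos, hQinn]
    have hode' : ∀ r, deriv (deriv f) r
        = (((blackHolePotential m r - lam.re : ℝ) : ℂ)) * f r := by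
      intro r
      rw [hode r]
      congr 1
      rw [Complex.ext_iff]
      constructor
      · simp
      · simp [hbeta]
    -- square root of the eigenvalue
    set s := Real.sqrt lam.re with hsdef
    have hspos : 0 < s := Real.sqrt_pos.mpr halpha
    have hs2 : s ^ 2 = lam.re := Real.sq_sqrt halpha.le
    -- the energy function
    set E := fun r => lam.re * auxU f r + auxQ f r with hEdef
    have hEnn : ∀ r, 0 ≤ E r :=
      fun r => add_nonneg (mul_nonneg halpha.le (hUnn r)) (hQnn r)
    have hEint : Integrable E volume := (hUint.const_mul _).add hQint
    have hEder : ∀ r, HasDerivAt E (2 * blackHolePotential m r * auxP f r) r := by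
      intro r
      have h1 := ((hUder r).const_mul lam.re).add (hQder r)
      have e : lam.re * (2 * auxP f r)
          + 2 * ((starRingEnd ℂ) (deriv f r) * deriv (deriv f) r).re
          = 2 * blackHolePotential m r * auxP f r := by
        rw [hode' r]
        rw [show ((starRingEnd ℂ) (deriv f r)
            * (((blackHolePotential m r - lam.re : ℝ) : ℂ) * f r)).re
            = (blackHolePotential m r - lam.re)
              * ((starRingEnd ℂ) (f r) * deriv f r).re by
          simp [Complex.mul_re, Complex.conj_re, Complex.conj_im]
          ring]
        unfold auxP
        ring
      rw [← e]
      exact h1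
    have habsP2 : ∀ r, |auxP f r| ≤ ‖f r‖ * ‖deriv f r‖ := by
      intro r
      unfold auxP
      calc |((starRingEnd ℂ) (f r) * deriv f r).re|
          ≤ ‖(starRingEnd ℂ) (f r) * deriv f r‖ := Complex.abs_re_le_norm _
        _ = ‖f r‖ * ‖deriv f r‖ := by rw [norm_mul, RCLike.norm_conj]
    have hEbound : ∀ r, |2 * blackHolePotential m r * auxP f r|
        ≤ (blackHolePotential m r / s) * E r := by
      intro r
      refine aux_Ebound s _ _ (‖f r‖) (‖deriv f r‖) (E r) hspos (hVnn r) (habsP2 r) ?_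
      rw [hEdef]
      simp only [hs2]
      rfl
    -- antiderivative of the potential
    set Φ := fun r => ∫ t in (0:ℝ)..r, blackHolePotential m t with hPhidef
    have hPhider : ∀ r, HasDerivAt Φ (blackHolePotential m r) r := fun r =>
      intervalIntegral.integral_hasDerivAt_right
        ((bhp_cont m).intervalIntegrable _ _)
        ((bhp_cont m).stronglyMeasurableAtFilter _ _) (bhp_cont m).continuousAt
    have hPhilow : ∀ r ≤ (0:ℝ), -(1/4 + m^2) ≤ Φ r := by
      intro r hr
      have h1 : (∫ t in r..(0:ℝ), blackHolePotential m t)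
          ≤ ∫ t in r..(0:ℝ), (1/4 + m^2) * Real.exp t :=
        intervalIntegral.integral_mono_on hr
          ((bhp_cont m).intervalIntegrable _ _)
          ((continuous_const.mul Real.continuous_exp).intervalIntegrable _ _)
          (fun x _ => bhp_le_exp m x)
      have h2 : (∫ t in r..(0:ℝ), (1/4 + m^2) * Real.exp t)
          = (1/4 + m^2) * (1 - Real.exp r) := by
        rw [intervalIntegral.integral_const_mul, integral_exp, Real.exp_zero]
      have h3 : Φ r = - ∫ t in r..(0:ℝ), blackHolePotential m t := by
        rw [hPhidef]
        exact intervalIntegral.integral_symm r 0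
      have h4 := Real.exp_pos r
      have hm2 : (0:ℝ) ≤ 1/4 + m^2 := by positivity
      rw [h3]
      nlinarith [h1, h2, mul_nonneg hm2 h4.le]
    -- the comparison function H = E * exp(-(1/s) Φ) is antitone
    set H := fun r => E r * Real.exp (-(1/s) * Φ r) with hHdef
    have hHder : ∀ r, HasDerivAt H
        ((2 * blackHolePotential m r * auxP f r
          - 1/s * blackHolePotential m r * E r) * Real.exp (-(1/s) * Φ r)) r := by
      intro r
      have hinner : HasDerivAt (fun x => -(1/s) * Φ x) (-(1/s) * blackHolePotential m r) r :=
        (hPhider r).const_mul (-(1/s))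
      have hexp : HasDerivAt (fun x => Real.exp (-(1/s) * Φ x))
          (Real.exp (-(1/s) * Φ r) * (-(1/s) * blackHolePotential m r)) r := hinner.exp
      have := (hEder r).mul hexp
      exact this.congr_deriv (by ring)
    have hHanti : Antitone H := by
      refine antitone_of_deriv_nonpos (fun r => (hHder r).differentiableAt) ?_
      intro r
      rw [(hHder r).deriv]
      have h5 : 2 * blackHolePotential m r * auxP f r
          ≤ 1/s * blackHolePotential m r * E r := by
        calc 2 * blackHolePotential m r * auxP f r
            ≤ |2 * blackHolePotential m r * auxP f r| := le_abs_self _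
          _ ≤ blackHolePotential m r / s * E r := hEbound r
          _ = 1/s * blackHolePotential m r * E r := by ring
      have hnonpos : 2 * blackHolePotential m r * auxP f r
          - 1/s * blackHolePotential m r * E r ≤ 0 := by linarith
      exact mul_nonpos_of_nonpos_of_nonneg hnonpos (Real.exp_pos _).le
    -- pick a point where U is positive
    obtain ⟨r0, hr0⟩ : ∃ r0, 0 < auxU f r0 := by
      by_contra hcc
      push_neg at hcc
      have hz : ∀ x, auxU f x = 0 := fun x => le_antisymm (hcc x) (hUnn x)
      exact hU0 (integral_eq_zero_of_ae (Eventually.of_forall hz))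
    have hEr0 : 0 < E r0 := by
      have := hQnn r0
      have := mul_pos halpha hr0
      rw [hEdef]
      simp only
      linarith
    -- the contradiction: E is bounded below on a left ray
    set K : ℝ := 1/4 + m^2 with hKdef
    set δ : ℝ := E r0 * Real.exp (-(1/s) * Φ r0) * Real.exp (-(1/s * K)) with hδdef
    have hδpos : 0 < δ := by positivity
    refine aux_not_int_Iic E hEint (min r0 0) δ hδpos (fun x hx => ?_)
    have hxr0 : x ≤ r0 := le_trans hx (min_le_left _ _)
    have hx0 : x ≤ 0 := le_trans hx (min_le_right _ _)
    have hH1 : H r0 ≤ H x := hHanti hxr0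
    have hΦx := hPhilow x hx0
    have hexp_le : Real.exp (-(1/s) * Φ x) ≤ Real.exp (1/s * K) := by
      apply Real.exp_le_exp.mpr
      have hinv : 0 < 1/s := by positivity
      have := mul_le_mul_of_nonneg_left hΦx hinv.le
      calc -(1/s) * Φ x ≤ -(1/s) * (-K) := by linarith
        _ = 1/s * K := by ring
      
    have key : E r0 * Real.exp (-(1/s) * Φ r0) ≤ E x * Real.exp (1/s * K) := by
      calc E r0 * Real.exp (-(1/s) * Φ r0) = H r0 := rfl
        _ ≤ H x := hH1
        _ = E x * Real.exp (-(1/s) * Φ x) := rfl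
        _ ≤ E x * Real.exp (1/s * K) :=
            mul_le_mul_of_nonneg_left hexp_le (hEnn x)
    have hmul : δ * Real.exp (1/s * K) = E r0 * Real.exp (-(1/s) * Φ r0) := by
      rw [hδdef, mul_assoc, ← Real.exp_add]
      norm_num
    have hepos : 0 < Real.exp (1/s * K) := Real.exp_pos _
    have : δ * Real.exp (1/s * K) ≤ E x * Real.exp (1/s * K) := by
      rw [hmul]; exact key
    exact le_of_mul_le_mul_right this hepos
end

section
/- Let m > 0 and k > 0, and note that a + b = c = 1 − 2iω. The mode functions develop only a logarithmic singularity at the black-hole singularity uv = 1: the function x ↦ F(a,b;a+b;x) + (Γ(a+b)/(Γ(a)Γ(b))) · log(1−x) is bounded on the interval [0,1). -/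
open Real Complex Filter Topology

/-- The Gauss hypergeometric series `F(a,b;c;z) = ∑ (a)_n (b)_n / ((c)_n n!) zⁿ`. -/
noncomputable def gaussHyp (a b c z : ℂ) : ℂ :=
  ∑' n : ℕ, (ascPochhammer ℂ n).eval a * (ascPochhammer ℂ n).eval b /
      ((ascPochhammer ℂ n).eval c * (n.factorial : ℂ)) * z ^ n

-- pochhammer as product
lemma asc_eval_prod (z : ℂ) (n : ℕ) :
    (ascPochhammer ℂ n).eval z = ∏ j ∈ Finset.range n, (z + j) := by
  induction n with
  | zero => simp
  | succ n ih => rw [ascPochhammer_succ_eval, Finset.prod_range_succ, ih]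

lemma asc_ne_zero {z : ℂ} (hz : ∀ n : ℕ, z + n ≠ 0) (n : ℕ) :
    (ascPochhammer ℂ n).eval z ≠ 0 := by
  rw [asc_eval_prod]
  exact Finset.prod_ne_zero_iff.2 fun j _ => hz j

set_option maxHeartbeats 2000000 in
lemma bh_aux (a b : ℂ) (ha : ∀ n : ℕ, a + n ≠ 0) (hb : ∀ n : ℕ, b + n ≠ 0)
    (hre : (a + b).re = 1) :
    ∃ C : ℝ, ∀ x ∈ Set.Ico (0 : ℝ) 1,
      ‖gaussHyp a b (a + b) x +
        Complex.Gamma (a + b) / (Complex.Gamma a * Complex.Gamma b) * Complex.log (1 - x)‖ ≤ C := by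
  set c : ℂ := a + b with hc_def
  have hGa : Complex.Gamma a ≠ 0 :=
    Complex.Gamma_ne_zero fun m h => ha m (by rw [h]; ring)
  have hGb : Complex.Gamma b ≠ 0 :=
    Complex.Gamma_ne_zero fun m h => hb m (by rw [h]; ring)
  have hc : ∀ n : ℕ, c + n ≠ 0 := by
    intro n h
    have : (c + n).re = 1 + n := by simp [hre]
    rw [h] at this
    simp at this
    linarith [this, Nat.cast_nonneg (α := ℝ) n]
  have hpa := asc_ne_zero ha
  have hpb := asc_ne_zero hb
  have hpc := asc_ne_zero hc
  -- the shifted coefficient sequence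
  set P : ℕ → ℂ := fun n =>
    (ascPochhammer ℂ (n+1)).eval a * (ascPochhammer ℂ (n+1)).eval b /
      ((ascPochhammer ℂ (n+1)).eval c * (n.factorial : ℂ)) with hP_def
  set M : ℝ := ‖a * b‖ with hM_def
  have hM0 : 0 ≤ M := norm_nonneg _
  -- recurrence
  have hstep : ∀ n : ℕ, P (n+1) - P n = P n * (a * b / (((n:ℂ)+1) * (c + ((n:ℂ)+1)))) := by
    intro n
    have h1 : (c + ((n:ℂ)+1)) ≠ 0 := by
      have := hc (n+1); push_cast at this; exact this
    have h2 : ((n:ℂ)+1) ≠ 0 := by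
      exact_mod_cast (Nat.cast_ne_zero (R := ℂ)).2 (Nat.succ_ne_zero n)
    have h3 : ((n.factorial : ℂ)) ≠ 0 := Nat.cast_ne_zero.2 n.factorial_ne_zero
    have h4 := hpc (n+1)
    have ea : (ascPochhammer ℂ (n+2)).eval a = (ascPochhammer ℂ (n+1)).eval a * (a + (n+1)) := by
      rw [ascPochhammer_succ_eval]; push_cast; ring
    have eb : (ascPochhammer ℂ (n+2)).eval b = (ascPochhammer ℂ (n+1)).eval b * (b + (n+1)) := by
      rw [ascPochhammer_succ_eval]; push_cast; ring
    have ec : (ascPochhammer ℂ (n+2)).eval c = (ascPochhammer ℂ (n+1)).eval c * (c + (n+1)) := by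
      rw [ascPochhammer_succ_eval]; push_cast; ring
    have ef : ((n+1).factorial : ℂ) = (n.factorial : ℂ) * ((n:ℂ)+1) := by
      rw [Nat.factorial_succ]; push_cast; ring
    simp only [hP_def, ea, eb, ec, ef]
    field_simp
    rw [hc_def]
    ring
  -- norm bound on the multiplier
  have htb : ∀ n : ℕ, ‖a * b / (((n:ℂ)+1) * (c + ((n:ℂ)+1)))‖ ≤ M / (((n:ℝ)+1) * ((n:ℝ)+2)) := by
    intro n
    have hd : ((n:ℝ)+1) * ((n:ℝ)+2) ≤ ‖((n:ℂ)+1) * (c + ((n:ℂ)+1))‖ := by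
      rw [norm_mul]
      have h1 : ‖((n:ℂ)+1)‖ = (n:ℝ)+1 := by
        rw [show ((n:ℂ)+1) = ((n+1:ℕ):ℂ) by push_cast; ring, Complex.norm_natCast]
        push_cast; ring
      have h2 : (n:ℝ)+2 ≤ ‖c + ((n:ℂ)+1)‖ := by
        have h := Complex.re_le_norm (c + ((n:ℂ)+1))
        refine le_trans (le_of_eq ?_) h
        simp [hre]; ring
      rw [h1]
      have h3 : (0:ℝ) ≤ (n:ℝ)+1 := by positivity
      exact mul_le_mul_of_nonneg_left h2 h3
    rw [norm_div]
    exact div_le_div_of_nonneg_left hM0 (by positivity) hd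
  -- uniform bound on P
  set B : ℝ := ‖P 0‖ * Real.exp M with hB_def
  have hB0 : 0 ≤ B := mul_nonneg (norm_nonneg _) (Real.exp_nonneg M)
  have hPB : ∀ n : ℕ, ‖P n‖ ≤ ‖P 0‖ * Real.exp (M * (1 - 1/((n:ℝ)+1))) := by
    intro n
    induction n with
    | zero => simp
    | succ n ih =>
      have e1 : P (n+1) = P n * (1 + a * b / (((n:ℂ)+1) * (c + ((n:ℂ)+1)))) := by
        have := hstep n; rw [mul_add, mul_one]; linear_combination this
      rw [e1, norm_mul]
      have h2 : ‖(1 : ℂ) + a * b / (((n:ℂ)+1) * (c + ((n:ℂ)+1)))‖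
          ≤ Real.exp (M / (((n:ℝ)+1) * ((n:ℝ)+2))) := by
        calc ‖(1 : ℂ) + a * b / (((n:ℂ)+1) * (c + ((n:ℂ)+1)))‖
            ≤ 1 + ‖a * b / (((n:ℂ)+1) * (c + ((n:ℂ)+1)))‖ := by refine (norm_add_le _ _).trans_eq ?_; rw [norm_one]
          _ ≤ 1 + M / (((n:ℝ)+1) * ((n:ℝ)+2)) := by linarith [htb n]
          _ ≤ Real.exp (M / (((n:ℝ)+1) * ((n:ℝ)+2))) := by
              have := Real.add_one_le_exp (M / (((n:ℝ)+1) * ((n:ℝ)+2)))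
              linarith
      calc ‖P n‖ * ‖(1 : ℂ) + a * b / (((n:ℂ)+1) * (c + ((n:ℂ)+1)))‖
          ≤ (‖P 0‖ * Real.exp (M * (1 - 1/((n:ℝ)+1)))) * Real.exp (M / (((n:ℝ)+1) * ((n:ℝ)+2))) := by
            exact mul_le_mul ih h2 (norm_nonneg _) (by positivity)
        _ = ‖P 0‖ * Real.exp (M * (1 - 1/((n:ℝ)+1)) + M / (((n:ℝ)+1) * ((n:ℝ)+2))) := by
            rw [Real.exp_add]; ring
        _ = ‖P 0‖ * Real.exp (M * (1 - 1/(((n+1:ℕ):ℝ)+1))) := by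
            push_cast
            congr 1
            congr 1
            have h1 : ((n:ℝ)+1) ≠ 0 := by positivity
            have h2 : ((n:ℝ)+2) ≠ 0 := by positivity
            field_simp
            ring
  have hPB' : ∀ n : ℕ, ‖P n‖ ≤ B := by
    intro n
    refine (hPB n).trans ?_
    rw [hB_def]
    have h1 : M * (1 - 1/((n:ℝ)+1)) ≤ M := by
      have : 0 ≤ 1/((n:ℝ)+1) := by positivity
      nlinarith
    exact mul_le_mul_of_nonneg_left (Real.exp_le_exp.2 h1) (norm_nonneg _)
  -- bound on differences
  have hdiff : ∀ n : ℕ, ‖P (n+1) - P n‖ ≤ B * M * (1/((n:ℝ)+1) - 1/((n:ℝ)+2)) := by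
    intro n
    rw [hstep n, norm_mul]
    have e : 1/((n:ℝ)+1) - 1/((n:ℝ)+2) = 1 / (((n:ℝ)+1) * ((n:ℝ)+2)) := by
      have h1 : ((n:ℝ)+1) ≠ 0 := by positivity
      have h2 : ((n:ℝ)+2) ≠ 0 := by positivity
      field_simp
      ring
    rw [e]
    calc ‖P n‖ * ‖a * b / (((n:ℂ)+1) * (c + ((n:ℂ)+1)))‖
        ≤ B * (M / (((n:ℝ)+1) * ((n:ℝ)+2))) :=
          mul_le_mul (hPB' n) (htb n) (norm_nonneg _) hB0
      _ = B * M * (1 / (((n:ℝ)+1) * ((n:ℝ)+2))) := by ring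
  -- Cauchy-type estimate
  have hcauchy : ∀ n m : ℕ, ‖P (n+m) - P n‖ ≤ B * M * (1/((n:ℝ)+1) - 1/((n:ℝ)+(m:ℝ)+1)) := by
    intro n m
    induction m with
    | zero => simp
    | succ m ih =>
      have h1 : ‖P (n+m+1) - P n‖ ≤ ‖P (n+m+1) - P (n+m)‖ + ‖P (n+m) - P n‖ := by
        have := norm_add_le (P (n+m+1) - P (n+m)) (P (n+m) - P n)
        simpa using this
      have h2 := hdiff (n+m)
      push_cast at h2
      calc ‖P (n+(m+1)) - P n‖ = ‖P (n+m+1) - P n‖ := by ring_nf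
        _ ≤ ‖P (n+m+1) - P (n+m)‖ + ‖P (n+m) - P n‖ := h1
        _ ≤ B * M * (1/((n:ℝ)+(m:ℝ)+1) - 1/((n:ℝ)+(m:ℝ)+2)) +
            B * M * (1/((n:ℝ)+1) - 1/((n:ℝ)+(m:ℝ)+1)) := by
              refine add_le_add (le_trans (le_of_eq ?_) (le_trans h2 (le_of_eq ?_))) ih
              · ring_nf
              · ring_nf
        _ = B * M * (1/((n:ℝ)+1) - 1/((n:ℝ)+((m+1:ℕ):ℝ)+1)) := by push_cast; ring
  -- the limit of P is the Gamma ratio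
  set K : ℂ := Complex.Gamma c / (Complex.Gamma a * Complex.Gamma b) with hK_def
  have heq : ∀ n : ℕ, 1 ≤ n →
      Complex.GammaSeq c n / (Complex.GammaSeq a n * Complex.GammaSeq b n) = P n := by
    intro n hn
    have hN : ((n:ℂ)) ≠ 0 := Nat.cast_ne_zero.2 (by omega)
    have hNa : ((n:ℂ)) ^ a ≠ 0 := by simp [Complex.cpow_eq_zero_iff, hN]
    have hNb : ((n:ℂ)) ^ b ≠ 0 := by simp [Complex.cpow_eq_zero_iff, hN]
    have hF : ((n.factorial : ℂ)) ≠ 0 := Nat.cast_ne_zero.2 n.factorial_ne_zero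
    have hprod : ∀ z : ℂ, ∏ j ∈ Finset.range (n+1), (z + (j:ℂ)) =
        (ascPochhammer ℂ (n+1)).eval z := fun z => (asc_eval_prod z (n+1)).symm
    simp only [Complex.GammaSeq, hprod]
    have hcab : ((n:ℂ)) ^ c = ((n:ℂ)) ^ a * ((n:ℂ)) ^ b := by
      rw [hc_def, Complex.cpow_add _ _ hN]
    rw [hcab, hP_def]
    have h1 := hpa (n+1)
    have h2 := hpb (n+1)
    have h3 := hpc (n+1)
    field_simp
  have hlim : Tendsto P atTop (𝓝 K) := by
    have h1 : Tendsto (fun n => Complex.GammaSeq c n /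
        (Complex.GammaSeq a n * Complex.GammaSeq b n)) atTop (𝓝 K) :=
      (Complex.GammaSeq_tendsto_Gamma c).div
        ((Complex.GammaSeq_tendsto_Gamma a).mul (Complex.GammaSeq_tendsto_Gamma b))
        (mul_ne_zero hGa hGb)
    refine h1.congr' ?_
    filter_upwards [eventually_ge_atTop 1] with n hn
    exact heq n hn
  -- quantitative bound on the distance to the limit
  have hKb : ∀ n : ℕ, ‖K - P n‖ ≤ B * M / ((n:ℝ)+1) := by
    intro n
    have h1 : Tendsto (fun m : ℕ => ‖P (m+n) - P n‖) atTop (𝓝 ‖K - P n‖) :=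
      ((hlim.comp (tendsto_add_atTop_nat n)).sub tendsto_const_nhds).norm
    refine le_of_tendsto h1 (Filter.Eventually.of_forall fun m => ?_)
    have h2 := hcauchy n m
    rw [add_comm n m] at h2
    refine h2.trans ?_
    have h3 : 0 ≤ 1/((n:ℝ)+(m:ℝ)+1) := by positivity
    have h4 : 0 ≤ B * M := mul_nonneg hB0 hM0
    rw [div_eq_mul_one_div (B*M)]
    exact mul_le_mul_of_nonneg_left (by linarith) h4
  -- the comparison sequence
  set v : ℕ → ℝ := fun n => if n = 0 then 1 else B * M / (n:ℝ)^2 with hv_def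
  have hv0 : ∀ n, 0 ≤ v n := by
    intro n
    by_cases h : n = 0 <;> simp [hv_def, h]
    positivity
  have hvsum : Summable v := by
    rw [← summable_nat_add_iff 1]
    have base : Summable (fun n : ℕ => 1/((n:ℝ))^2) :=
      Real.summable_one_div_nat_pow.2 one_lt_two
    have shifted := (summable_nat_add_iff 1).2 base
    refine (shifted.mul_left (B*M)).congr fun n => ?_
    simp [hv_def]
    ring
  refine ⟨∑' n, v n, fun x hx => ?_⟩
  obtain ⟨hx0, hx1⟩ := hx
  have hxn : ‖(x:ℂ)‖ < 1 := by
    rw [Complex.norm_real, Real.norm_eq_abs, _root_.abs_of_nonneg hx0]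
    exact hx1
  have hxn1 : ‖(x:ℂ)‖ ≤ 1 := le_of_lt hxn
  -- series terms
  set f : ℕ → ℂ := fun n => (ascPochhammer ℂ n).eval a * (ascPochhammer ℂ n).eval b /
      ((ascPochhammer ℂ n).eval c * (n.factorial : ℂ)) * (x:ℂ) ^ n with hf_def
  set g : ℕ → ℂ := fun n => f n - K * ((x:ℂ) ^ n / (n:ℂ)) with hg_def
  have hcoef : ∀ n : ℕ, (ascPochhammer ℂ (n+1)).eval a * (ascPochhammer ℂ (n+1)).eval b /
      ((ascPochhammer ℂ (n+1)).eval c * ((n+1).factorial : ℂ)) = P n / ((n:ℂ)+1) := by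
    intro n
    have h3 : ((n.factorial : ℂ)) ≠ 0 := Nat.cast_ne_zero.2 n.factorial_ne_zero
    have h2 : ((n:ℂ)+1) ≠ 0 := by
      exact_mod_cast (Nat.cast_ne_zero (R := ℂ)).2 (Nat.succ_ne_zero n)
    have h4 := hpc (n+1)
    have ef : (((n+1).factorial : ℕ) : ℂ) = (n.factorial : ℂ) * ((n:ℂ)+1) := by
      rw [Nat.factorial_succ]; push_cast; ring
    simp only [hP_def, ef]
    rw [div_div]
    congr 1
    ring
  have hgv : ∀ n : ℕ, ‖g n‖ ≤ v n := by
    intro n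
    cases n with
    | zero =>
      simp [hg_def, hf_def, hv_def]
    | succ n =>
      have e1 : g (n+1) = ((P n - K) / ((n:ℂ)+1)) * (x:ℂ)^(n+1) := by
        simp only [hg_def, hf_def, hcoef n]
        have h2 : ((n:ℂ)+1) ≠ 0 := by
          exact_mod_cast (Nat.cast_ne_zero (R := ℂ)).2 (Nat.succ_ne_zero n)
        have : ((n+1:ℕ):ℂ) = (n:ℂ)+1 := by push_cast; ring
        rw [this]
        field_simp
      rw [e1]
      have h2 : ‖((n:ℂ)+1)‖ = (n:ℝ)+1 := by
        rw [show ((n:ℂ)+1) = ((n+1:ℕ):ℂ) by push_cast; ring, Complex.norm_natCast]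
        push_cast; ring
      have h3 : ‖P n - K‖ ≤ B * M / ((n:ℝ)+1) := by
        rw [← norm_neg]; simpa [neg_sub] using hKb n
      have h4 : ‖(x:ℂ)^(n+1)‖ ≤ 1 := by
        rw [norm_pow]; exact pow_le_one₀ (norm_nonneg _) hxn1
      calc ‖((P n - K) / ((n:ℂ)+1)) * (x:ℂ)^(n+1)‖
          = ‖P n - K‖ / ((n:ℝ)+1) * ‖(x:ℂ)^(n+1)‖ := by rw [norm_mul, norm_div, h2]
        _ ≤ (B * M / ((n:ℝ)+1)) / ((n:ℝ)+1) * 1 := by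
            refine mul_le_mul ?_ h4 (norm_nonneg _) (by positivity)
            have hd : (0:ℝ) < (n:ℝ)+1 := by positivity
            exact (div_le_div_iff_of_pos_right hd).2 h3
        _ ≤ v (n+1) := by
            have : v (n+1) = B * M / ((n+1:ℕ):ℝ)^2 := by simp [hv_def]
            rw [this]
            push_cast
            rw [mul_one, div_div]
            apply div_le_div_of_nonneg_left (mul_nonneg hB0 hM0) (by positivity)
            nlinarith
  have hgnorm : Summable (fun n => ‖g n‖) :=
    Summable.of_nonneg_of_le (fun n => norm_nonneg _) hgv hvsum
  have hgs : Summable g := hgnorm.of_norm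
  have hlogsum : HasSum (fun n : ℕ => (x:ℂ)^n/(n:ℂ)) (-Complex.log (1 - (x:ℂ))) :=
    Complex.hasSum_taylorSeries_neg_log hxn
  have hKl : HasSum (fun n : ℕ => K * ((x:ℂ)^n/(n:ℂ))) (K * -Complex.log (1 - (x:ℂ))) :=
    hlogsum.mul_left K
  have hfs : Summable f := by
    have e : f = fun n => g n + K * ((x:ℂ)^n/(n:ℂ)) := by
      funext n; simp [hg_def]
    rw [e]
    exact hgs.add hKl.summable
  have htot : HasSum g (∑' n, f n - K * -Complex.log (1 - (x:ℂ))) := hfs.hasSum.sub hKl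
  have hval : gaussHyp a b (a + b) (x:ℂ) +
      Complex.Gamma (a + b) / (Complex.Gamma a * Complex.Gamma b) * Complex.log (1 - (x:ℂ))
      = ∑' n, g n := by
    rw [htot.tsum_eq]
    have : gaussHyp a b (a + b) (x:ℂ) = ∑' n, f n := rfl
    rw [this, hK_def, hc_def]
    ring
  rw [hval]
  calc ‖∑' n, g n‖ ≤ ∑' n, ‖g n‖ := norm_tsum_le_tsum_norm hgnorm
    _ ≤ ∑' n, v n := Summable.tsum_le_tsum hgv hgnorm hvsum

/-- with `a = 1/2 + i(k−ω)`, `b = 1/2 − i(k+ω)` (so `a+b = c = 1−2iω`),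
the function `x ↦ F(a,b;a+b;x) + (Γ(a+b)/(Γ(a)Γ(b))) log(1−x)` is bounded on `[0,1)`:
the mode functions have only a logarithmic singularity at `uv = 1`. -/
theorem bh_log_singularity (m k : ℝ) (hm : 0 < m) (hk : 0 < k) :
    ∃ C : ℝ, ∀ x ∈ Set.Ico (0 : ℝ) 1,
      ‖gaussHyp (1 / 2 + Complex.I * ((k : ℂ) - (bhOmega m k : ℂ)))
            (1 / 2 - Complex.I * ((k : ℂ) + (bhOmega m k : ℂ)))
            ((1 / 2 + Complex.I * ((k : ℂ) - (bhOmega m k : ℂ)))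
              + (1 / 2 - Complex.I * ((k : ℂ) + (bhOmega m k : ℂ)))) (x : ℂ)
          + Complex.Gamma ((1 / 2 + Complex.I * ((k : ℂ) - (bhOmega m k : ℂ)))
              + (1 / 2 - Complex.I * ((k : ℂ) + (bhOmega m k : ℂ)))) /
            (Complex.Gamma (1 / 2 + Complex.I * ((k : ℂ) - (bhOmega m k : ℂ))) *
              Complex.Gamma (1 / 2 - Complex.I * ((k : ℂ) + (bhOmega m k : ℂ)))) *
            Complex.log (1 - (x : ℂ))‖ ≤ C := by
  set a : ℂ := 1 / 2 + Complex.I * ((k : ℂ) - (bhOmega m k : ℂ)) with ha_def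
  set b : ℂ := 1 / 2 - Complex.I * ((k : ℂ) + (bhOmega m k : ℂ)) with hb_def
  have hra : a.re = 1/2 := by simp [ha_def]
  have hrb : b.re = 1/2 := by simp [hb_def]
  have ha : ∀ n : ℕ, a + n ≠ 0 := by
    intro n h
    have h2 := congrArg Complex.re h
    simp [hra, Complex.add_re] at h2
    have : (0:ℝ) ≤ (n:ℝ) := Nat.cast_nonneg n
    linarith
  have hb : ∀ n : ℕ, b + n ≠ 0 := by
    intro n h
    have h2 := congrArg Complex.re h
    simp [hrb, Complex.add_re] at h2
    have : (0:ℝ) ≤ (n:ℝ) := Nat.cast_nonneg n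
    linarith
  have hre : (a + b).re = 1 := by
    rw [Complex.add_re, hra, hrb]; norm_num
  exact bh_aux a b ha hb hre
end

section
/- Let h ∈ (0,1), let ω > 0 be real, and let μ ∈ ℂ. Define the finite-difference second derivative of an entire function a : ℂ → ℂ by (D_t² a)(t) = (a(t + 2πih) − 2a(t) + a(t − 2πih)) / (−4 sin²(πh)). Then the exponential a(t) = e^{−iμt} satisfies D_t² a = −[ω]_h² a (for all t ∈ ℂ) if and only if sinh²(πhμ) = sinh²(πhω), which holds if and only if there exists an integer n such that μ = ω + in/h or μ = −ω + in/h. In particular, besides the oscillatory solutions e^{∓iωt} all other exponential solutions blow up as t → +∞ or t → −∞. -/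
open Real Complex

lemma my_sinh_def (z : ℂ) : Complex.sinh z = (Complex.exp z - Complex.exp (-z)) / 2 := rfl

lemma my_sinh_eq_zero_iff (z : ℂ) : Complex.sinh z = 0 ↔ ∃ k : ℤ, z = k * π * I := by
  have h1 : Complex.sinh z = 0 ↔ Complex.sin (z * I) = 0 := by
    rw [Complex.sin_mul_I, mul_eq_zero]
    simp [Complex.I_ne_zero]
  rw [h1, Complex.sin_eq_zero_iff]
  constructor
  · rintro ⟨k, hk⟩
    exact ⟨-k, by push_cast; linear_combination z * Complex.I_sq - Complex.I * hk⟩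
  · rintro ⟨k, hk⟩
    exact ⟨-k, by push_cast; linear_combination hk * Complex.I + (k:ℂ) * π * Complex.I_sq⟩

lemma my_sinh_sq_sub (z w : ℂ) :
    Complex.sinh z ^ 2 - Complex.sinh w ^ 2 = Complex.sinh (z + w) * Complex.sinh (z - w) := by
  simp only [my_sinh_def, sub_eq_add_neg, neg_add, neg_neg, Complex.exp_add, Complex.exp_neg]
  have hz := Complex.exp_ne_zero z
  have hw := Complex.exp_ne_zero w
  field_simp
  ring

lemma my_four_sinh_sq (u : ℂ) :
    Complex.exp (2 * u) - 2 + Complex.exp (-(2 * u)) = 4 * Complex.sinh u ^ 2 := by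
  have h2 : (2 : ℂ) * u = u + u := by ring
  simp only [my_sinh_def, h2, neg_add, Complex.exp_add, Complex.exp_neg]
  have hu := Complex.exp_ne_zero u
  field_simp
  ring

/-- the exponential `a(t) = e^{−iμt}` solves the finite-difference
equation `D_t² a = −[ω]_h² a` iff `sinh²(πhμ) = sinh²(πhω)` iff `μ = ±ω + in/h` for some
integer `n`; moreover every non-oscillatory exponential solution (`μ ≠ ±ω`) blows up as
`t → +∞` or as `t → −∞`. -/
theorem deformed_time_equation_solutions (h : ℝ) (hh : h ∈ Set.Ioo (0 : ℝ) 1)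
    (ω : ℝ) (hω : 0 < ω) (μ : ℂ) :
    ((∀ t : ℂ,
        (Complex.exp (-Complex.I * μ * (t + 2 * (π : ℂ) * (h : ℂ) * Complex.I))
            - 2 * Complex.exp (-Complex.I * μ * t)
            + Complex.exp (-Complex.I * μ * (t - 2 * (π : ℂ) * (h : ℂ) * Complex.I))) /
          (-(4 * ((Real.sin (π * h) : ℝ) : ℂ) ^ 2))
        = -(((Real.sinh (π * h * ω) / Real.sin (π * h) : ℝ) : ℂ)) ^ 2 *
            Complex.exp (-Complex.I * μ * t))
      ↔ Complex.sinh ((π * h : ℝ) * μ) ^ 2 = ((Real.sinh (π * h * ω) : ℝ) : ℂ) ^ 2) ∧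
    (Complex.sinh ((π * h : ℝ) * μ) ^ 2 = ((Real.sinh (π * h * ω) : ℝ) : ℂ) ^ 2
      ↔ ∃ n : ℤ, μ = (ω : ℂ) + Complex.I * ((n : ℂ) / (h : ℂ))
          ∨ μ = -(ω : ℂ) + Complex.I * ((n : ℂ) / (h : ℂ))) ∧
    ((Complex.sinh ((π * h : ℝ) * μ) ^ 2 = ((Real.sinh (π * h * ω) : ℝ) : ℂ) ^ 2
        ∧ μ ≠ (ω : ℂ) ∧ μ ≠ -(ω : ℂ)) →
      (Filter.Tendsto (fun t : ℝ => ‖Complex.exp (-Complex.I * μ * (t : ℂ))‖)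
          Filter.atTop Filter.atTop
        ∨ Filter.Tendsto (fun t : ℝ => ‖Complex.exp (-Complex.I * μ * (t : ℂ))‖)
            Filter.atBot Filter.atTop)) := by
  obtain ⟨hh0, hh1⟩ := hh
  have hπ : (0:ℝ) < π := Real.pi_pos
  have hs : Real.sin (π * h) ≠ 0 :=
    ne_of_gt (Real.sin_pos_of_pos_of_lt_pi (by positivity) (by nlinarith))
  have hsc : ((Real.sin (π * h) : ℝ) : ℂ) ≠ 0 := by exact_mod_cast hs
  have hπc : (π:ℂ) ≠ 0 := by exact_mod_cast Real.pi_ne_zero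
  have hhc : (h:ℂ) ≠ 0 := by exact_mod_cast hh0.ne'
  set c : ℂ := ((π * h : ℝ) : ℂ) * μ with hc
  set w : ℂ := ((π * h * ω : ℝ) : ℂ) with hw
  have hShw : ((Real.sinh (π * h * ω) : ℝ) : ℂ) = Complex.sinh w := by
    rw [hw, Complex.ofReal_sinh]
  -- key bracket identity
  have key : ∀ t : ℂ,
      Complex.exp (-Complex.I * μ * (t + 2 * (π : ℂ) * (h : ℂ) * Complex.I))
        - 2 * Complex.exp (-Complex.I * μ * t)
        + Complex.exp (-Complex.I * μ * (t - 2 * (π : ℂ) * (h : ℂ) * Complex.I))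
      = Complex.exp (-Complex.I * μ * t) * (4 * Complex.sinh c ^ 2) := by
    intro t
    have h1 : -Complex.I * μ * (t + 2 * (π : ℂ) * (h : ℂ) * Complex.I)
        = -Complex.I * μ * t + 2 * c := by
      rw [hc]; push_cast
      linear_combination (-2 * (π:ℂ) * h * μ) * Complex.I_sq
    have h2 : -Complex.I * μ * (t - 2 * (π : ℂ) * (h : ℂ) * Complex.I)
        = -Complex.I * μ * t + -(2 * c) := by
      rw [hc]; push_cast
      linear_combination (2 * (π:ℂ) * h * μ) * Complex.I_sq
    rw [h1, h2, Complex.exp_add, Complex.exp_add, ← my_four_sinh_sq c]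
    ring
  -- part 2 as a standalone fact
  have part2 : Complex.sinh c ^ 2 = ((Real.sinh (π * h * ω) : ℝ) : ℂ) ^ 2
      ↔ ∃ n : ℤ, μ = (ω : ℂ) + Complex.I * ((n : ℂ) / (h : ℂ))
          ∨ μ = -(ω : ℂ) + Complex.I * ((n : ℂ) / (h : ℂ)) := by
    rw [hShw, ← sub_eq_zero, my_sinh_sq_sub, mul_eq_zero,
      my_sinh_eq_zero_iff, my_sinh_eq_zero_iff]
    constructor
    · rintro (⟨k, hk⟩ | ⟨k, hk⟩)
      · refine ⟨k, Or.inr ?_⟩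
        rw [hc, hw] at hk
        push_cast at hk
        have hk2 : (h:ℂ) * μ + h * ω = k * I :=
          mul_left_cancel₀ hπc (by linear_combination hk)
        field_simp
        linear_combination hk2
      · refine ⟨k, Or.inl ?_⟩
        rw [hc, hw] at hk
        push_cast at hk
        have hk2 : (h:ℂ) * μ - h * ω = k * I :=
          mul_left_cancel₀ hπc (by linear_combination hk)
        field_simp
        linear_combination hk2
    · rintro ⟨n, (hn | hn)⟩
      · have hn' : (h:ℂ) * μ = h * ω + Complex.I * n := by
          rw [hn]; field_simp
        refine Or.inr ⟨n, ?_⟩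
        rw [hc, hw]
        push_cast
        linear_combination (π:ℂ) * hn'
      · have hn' : (h:ℂ) * μ = -(h * ω) + Complex.I * n := by
          rw [hn]; field_simp
        refine Or.inl ⟨n, ?_⟩
        rw [hc, hw]
        push_cast
        linear_combination (π:ℂ) * hn'
  refine ⟨?_, part2, ?_⟩
  · -- part 1
    constructor
    · intro H
      have H0 := H 0
      rw [key 0, Complex.ofReal_div] at H0
      have he := Complex.exp_ne_zero (-Complex.I * μ * 0)
      have hsc2 : Complex.sin ((π:ℂ) * h) ≠ 0 := by
        rw [show ((π:ℂ) * h) = ((π * h : ℝ) : ℂ) by push_cast; ring, ← Complex.ofReal_sin]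
        exact_mod_cast hs
      rw [show ((Real.sinh (π * h * ω) : ℝ) : ℂ) = Complex.sinh ((π:ℂ) * h * ω) by
        push_cast; ring]
      field_simp [hsc2] at H0
      exact mul_right_cancel₀ (pow_ne_zero 2 hsc2) (by
        rw [← show ((Real.sinh (π * h * ω) : ℝ) : ℂ) = Complex.sinh ((π:ℂ) * h * ω) by push_cast; ring]
        linear_combination (-(Complex.sin ((π:ℂ) * h)) ^ 2) * H0)
    · intro hS t
      rw [key t, hS, Complex.ofReal_div]
      field_simp
  · -- part 3
    rintro ⟨hS, hμ1, hμ2⟩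
    obtain ⟨n, hn⟩ := part2.mp hS
    have hn0 : n ≠ 0 := by
      rintro rfl
      rcases hn with hn | hn
      · exact hμ1 (by simpa using hn)
      · exact hμ2 (by simpa using hn)
    have hdiv : ((n:ℂ) / (h:ℂ)) = (((n:ℝ) / h : ℝ) : ℂ) := by push_cast; ring
    have him : μ.im = (n:ℝ) / h := by
      rcases hn with hn | hn <;> rw [hn, hdiv] <;> simp
    have habs : ∀ t : ℝ,
        ‖Complex.exp (-Complex.I * μ * (t : ℂ))‖ = Real.exp ((n:ℝ)/h * t) := by
      intro t
      rw [Complex.norm_exp]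
      congr 1
      simp [Complex.mul_re, Complex.mul_im, him]
    rcases lt_or_gt_of_ne hn0 with hneg | hpos
    · right
      have hcneg : (n:ℝ)/h < 0 := div_neg_of_neg_of_pos (by exact_mod_cast hneg) hh0
      have : Filter.Tendsto (fun t : ℝ => (n:ℝ)/h * t) Filter.atBot Filter.atTop :=
        (Filter.tendsto_const_mul_atTop_of_neg hcneg).mpr Filter.tendsto_id
      rw [funext habs]
      exact Real.tendsto_exp_atTop.comp this
    · left
      have hcpos : 0 < (n:ℝ)/h := div_pos (by exact_mod_cast hpos) hh0
      have : Filter.Tendsto (fun t : ℝ => (n:ℝ)/h * t) Filter.atTop Filter.atTop :=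
        (Filter.tendsto_const_mul_atTop_of_pos hcpos).mpr Filter.tendsto_id
      rw [funext habs]
      exact Real.tendsto_exp_atTop.comp this
end
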